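/- arXiv:2509.03268 — 6 statements merged into one kernel-verified Lean document; each statement's English description precedes it below -/
import Mathlib

section
/- On the real line with the asymmetric distance d(x,y) = y−x for x ≤ y and d(x,y) = 1 for x > y, the curve γ(t) = t for t ∈ [0,1] is forward absolutely continuous but discontinuous with respect to the symmetrized topology; in fact, the symmetrized topology on (ℝ,d) is discrete. -/
open MeasureTheory

/-- The asymmetric distance on `ℝ`: `d(x,y) = y - x` for `x ≤ y`, and `d(x,y) = 1` for
`x > y`. -/
noncomputable def dAsym : ℝ → ℝ → ℝ := fun x y => if x ≤ y then y - x else 1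

/-- The symmetrized metric `d̂(x,y) = (d(x,y) + d(y,x))/2`. -/
noncomputable def dAsymHat : ℝ → ℝ → ℝ := fun x y => (dAsym x y + dAsym y x) / 2

/-- The topology on `ℝ` induced by the symmetrized metric `d̂`. -/
noncomputable def symTop : TopologicalSpace ℝ :=
  TopologicalSpace.generateFrom {s : Set ℝ | ∃ x r, 0 < r ∧ s = {y | dAsymHat x y < r}}

lemma ball_eq_singleton (x : ℝ) : {y | dAsymHat x y < 1/2} = {x} := by
  ext y
  simp only [Set.mem_setOf_eq, Set.mem_singleton_iff, dAsymHat, dAsym]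
  constructor
  · intro h
    by_contra hne
    rcases lt_or_gt_of_ne hne with hlt | hgt
    · rw [if_neg (not_le.2 hlt), if_pos hlt.le] at h
      linarith
    · rw [if_pos hgt.le, if_neg (not_le.2 hgt)] at h
      linarith
  · rintro rfl
    simp

lemma symTop_eq_bot : symTop = ⊥ := by
  apply eq_bot_of_singletons_open
  intro x
  rw [← ball_eq_singleton x]
  exact TopologicalSpace.GenerateOpen.basic _ ⟨x, 1/2, by norm_num, rfl⟩

lemma isOpen_symTop (s : Set ℝ) : @IsOpen ℝ symTop s := by
  rw [symTop_eq_bot]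
  exact @isOpen_discrete ℝ ⊥ (@DiscreteTopology.mk ℝ ⊥ rfl) s

/-- On the real line with the asymmetric distance `d(x,y) = y−x` for `x ≤ y`
and `d(x,y) = 1` for `x > y`, the curve `γ(t) = t`, `t ∈ [0,1]`, is forward absolutely
continuous but discontinuous with respect to the symmetrized topology; in fact, the
symmetrized topology is discrete. -/
theorem stmt_6 :
    (∃ f : ℝ → ℝ, (∀ s, 0 ≤ f s) ∧ IntegrableOn f (Set.Icc (0 : ℝ) 1) ∧
      ∀ t₁ t₂ : ℝ, t₁ ∈ Set.Icc (0 : ℝ) 1 → t₂ ∈ Set.Icc (0 : ℝ) 1 → t₁ ≤ t₂ →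
        dAsym t₁ t₂ ≤ ∫ s in t₁..t₂, f s) ∧
    symTop = ⊥ ∧
    ¬ @Continuous (Set.Icc (0 : ℝ) 1) ℝ _ symTop (fun t => (t : ℝ)) := by
  refine ⟨⟨fun _ => 1, fun _ => zero_le_one, integrableOn_const (by simp) (by simp), ?_⟩,
    symTop_eq_bot, ?_⟩
  · intro t₁ t₂ _ _ h
    rw [dAsym, if_pos h, intervalIntegral.integral_const, smul_eq_mul, mul_one]
  · intro hcont
    haveI : PreconnectedSpace (Set.Icc (0 : ℝ) 1) :=
      Subtype.preconnectedSpace isPreconnected_Icc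
    have hS := @Continuous.isOpen_preimage (Set.Icc (0:ℝ) 1) ℝ _ symTop _ hcont {(1/2 : ℝ)} (isOpen_symTop _)
    have hT := @Continuous.isOpen_preimage (Set.Icc (0:ℝ) 1) ℝ _ symTop _ hcont {(1/2 : ℝ)}ᶜ (isOpen_symTop _)
    have := (preconnectedSpace_iff_univ.mp inferInstance) _ _ hS hT
      (by intro z _; by_cases hz : (z : ℝ) = 1/2 <;> simp [hz])
      ⟨⟨1/2, by constructor <;> norm_num⟩, by simp⟩
      ⟨⟨0, by constructor <;> norm_num⟩, by norm_num⟩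
    rcases this with ⟨z, _, hz1, hz2⟩
    exact hz2 hz1
end

section
/- For every forward Lipschitz function f on a forward extended metric space, the positive part f⁺ and the function −f⁻ are forward Lipschitz, and the ascending slopes decompose as |D⁺f| = |D⁺f⁺| + |D⁺(−f⁻)| pointwise. -/
open Filter

/-- The reversibility `λ_d(A)` of a set `A`. -/
noncomputable def reversibility {X : Type*} (d : X → X → ENNReal) (A : Set X) : ENNReal :=
  sInf {l : ENNReal | 1 ≤ l ∧ ∀ x ∈ A, ∀ y ∈ A, d x y ≤ l * d y x}

/-- The topology `T̂ = T₊` of a forward extended metric space. -/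
noncomputable def asymTop {X : Type*} (d : X → X → ENNReal) : TopologicalSpace X :=
  TopologicalSpace.generateFrom
    ({s : Set X | ∃ x r, 0 < r ∧ s = {y | d x y < r}} ∪
     {s : Set X | ∃ x r, 0 < r ∧ s = {y | d y x < r}})

/-- The ascending slope `|D⁺f|(x)` of a real-valued function. -/
noncomputable def ascSlope {X : Type*} (d : X → X → ENNReal) (f : X → ℝ) (x : X) :
    ENNReal :=
  Filter.limsup (fun y => ENNReal.ofReal (f y - f x) / d x y)
    (@nhdsWithin X (asymTop d) x {x}ᶜ)

/-- Forward Lipschitz with constant `C`. -/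
def FwdLipschitzWith {X : Type*} (d : X → X → ENNReal) (C : ℝ) (f : X → ℝ) : Prop :=
  ∀ x y : X, ENNReal.ofReal (f y - f x) ≤ ENNReal.ofReal C * d x y

lemma aux_max_sub (a b : ℝ) : max a 0 - max b 0 ≤ max (a - b) 0 := by
  rcases le_total a 0 with h|h <;> rcases le_total b 0 with h'|h' <;>
    simp [max_def] <;> split_ifs <;> linarith

lemma aux_min_sub (a b : ℝ) : min a 0 - min b 0 ≤ max (a - b) 0 := by
  rcases le_total a 0 with h|h <;> rcases le_total b 0 with h'|h' <;>
    simp [min_def, max_def] <;> split_ifs <;> linarith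

lemma aux_ofReal_max (v : ℝ) : ENNReal.ofReal (max v 0) = ENNReal.ofReal v := by
  rcases le_total v 0 with h|h
  · simp [ENNReal.ofReal_of_nonpos h, max_eq_right h]
  · simp [max_eq_left h]

lemma aux_open_ball {X : Type*} (d : X → X → ENNReal) (x : X) (r : ENNReal) (hr : 0 < r)
    (hzero : ∀ x y : X, d x y = 0 ↔ x = y) :
    {y | d x y < r} ∈ @nhdsWithin X (asymTop d) x {x}ᶜ := by
  letI := asymTop d
  apply mem_nhdsWithin_of_mem_nhds
  apply IsOpen.mem_nhds
  · exact TopologicalSpace.isOpen_generateFrom_of_mem (Or.inl ⟨x, r, hr, rfl⟩)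
  · show d x x < r
    rw [(hzero x x).2 rfl]; exact hr

/-- For every forward Lipschitz function `f` on a forward extended metric
space, the positive part `f⁺` and the function `−f⁻` are forward Lipschitz, and the
ascending slopes decompose as `|D⁺f| = |D⁺f⁺| + |D⁺(−f⁻)|` pointwise. -/
theorem stmt_12 {X : Type*} (d : X → X → ENNReal)
    (hzero : ∀ x y : X, d x y = 0 ↔ x = y)
    (htri : ∀ x y z : X, d x z ≤ d x y + d y z)
    (htheta : ∃ Θ : X → ℝ → ℝ, (∀ x r, 0 < r → 1 ≤ Θ x r) ∧
      (∀ x, MonotoneOn (Θ x) (Set.Ioi (0 : ℝ))) ∧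
      (∀ x r, 0 < r →
        reversibility d {y | d x y < ENNReal.ofReal r} ≤ ENNReal.ofReal (Θ x r)))
    (f : X → ℝ) (C : ℝ) (hC : 0 ≤ C) (hLip : FwdLipschitzWith d C f) :
    FwdLipschitzWith d C (fun y => max (f y) 0) ∧
    FwdLipschitzWith d C (fun y => min (f y) 0) ∧
    ∀ x : X, ascSlope d f x =
      ascSlope d (fun y => max (f y) 0) x + ascSlope d (fun y => min (f y) 0) x := by
  refine ⟨?_, ?_, ?_⟩
  · intro x y
    calc ENNReal.ofReal (max (f y) 0 - max (f x) 0)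
        ≤ ENNReal.ofReal (max (f y - f x) 0) := ENNReal.ofReal_le_ofReal (aux_max_sub _ _)
      _ = ENNReal.ofReal (f y - f x) := aux_ofReal_max _
      _ ≤ _ := hLip x y
  · intro x y
    calc ENNReal.ofReal (min (f y) 0 - min (f x) 0)
        ≤ ENNReal.ofReal (max (f y - f x) 0) := ENNReal.ofReal_le_ofReal (aux_min_sub _ _)
      _ = ENNReal.ofReal (f y - f x) := aux_ofReal_max _
      _ ≤ _ := hLip x y
  · intro x
    rcases le_or_gt 0 (f x) with h | h
    · -- f x ≥ 0 : max part has same slope, min part has slope 0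
      have h1 : ascSlope d (fun y => max (f y) 0) x = ascSlope d f x := by
        unfold ascSlope
        apply limsup_congr
        apply Eventually.of_forall
        intro y
        have : ENNReal.ofReal (max (f y) 0 - max (f x) 0) = ENNReal.ofReal (f y - f x) := by
          rcases le_total (f y) 0 with hy | hy
          · rw [max_eq_right hy, max_eq_left h, ENNReal.ofReal_of_nonpos (by linarith),
              ENNReal.ofReal_of_nonpos (by linarith)]
          · rw [max_eq_left hy, max_eq_left h]
        simp only [this]
      have h2 : ascSlope d (fun y => min (f y) 0) x = 0 := by
        unfold ascSlope
        apply le_antisymm _ zero_le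
        apply limsup_le_of_le (by isBoundedDefault)
        apply Eventually.of_forall
        intro y
        simp only [min_eq_right h, sub_zero,
          ENNReal.ofReal_of_nonpos (min_le_right (f y) 0), ENNReal.zero_div, le_refl]
      rw [h1, h2, add_zero]
    · -- f x < 0 : eventually f y < 0
      have hr0 : 0 < -(f x) / (C + 1) := by
        apply div_pos (by linarith) (by linarith)
      have hCr : C * (-(f x) / (C + 1)) < -(f x) := by
        rw [mul_div_assoc', div_lt_iff₀ (by linarith : (0:ℝ) < C + 1)]
        nlinarith
      have hev : ∀ᶠ y in @nhdsWithin X (asymTop d) x {x}ᶜ,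
          d x y < ENNReal.ofReal (-(f x) / (C + 1)) :=
        aux_open_ball d x _ (ENNReal.ofReal_pos.2 hr0) hzero
      have hneg : ∀ᶠ y in @nhdsWithin X (asymTop d) x {x}ᶜ, f y < 0 := by
        filter_upwards [hev] with y hy
        by_contra hpos
        push_neg at hpos
        have h2 : ENNReal.ofReal (f y - f x) ≤ ENNReal.ofReal (C * (-(f x) / (C + 1))) := by
          calc ENNReal.ofReal (f y - f x) ≤ ENNReal.ofReal C * d x y := hLip x y
            _ ≤ ENNReal.ofReal C * ENNReal.ofReal (-(f x) / (C + 1)) :=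
                mul_le_mul_right hy.le _
            _ = ENNReal.ofReal (C * (-(f x) / (C + 1))) := (ENNReal.ofReal_mul hC).symm
        have h3 : ENNReal.ofReal (-(f x)) ≤ ENNReal.ofReal (f y - f x) :=
          ENNReal.ofReal_le_ofReal (by linarith)
        have h4 : -(f x) ≤ C * (-(f x) / (C + 1)) := by
          have h5 := h3.trans h2
          rwa [ENNReal.ofReal_le_ofReal_iff (mul_nonneg hC hr0.le)] at h5
        linarith
      have h1 : ascSlope d (fun y => max (f y) 0) x = 0 := by
        unfold ascSlope
        apply le_antisymm _ zero_le
        apply limsup_le_of_le (by isBoundedDefault)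
        filter_upwards [hneg] with y hy
        simp only [max_eq_right hy.le, max_eq_right h.le, sub_zero, ENNReal.ofReal_zero,
          ENNReal.zero_div, le_refl]
      have h2 : ascSlope d (fun y => min (f y) 0) x = ascSlope d f x := by
        unfold ascSlope
        apply limsup_congr
        filter_upwards [hneg] with y hy
        rw [min_eq_left hy.le, min_eq_left h.le]
      rw [h1, h2, zero_add]
end

section
/- If f is forward Lipschitz on a forward extended metric space, then the ascending slope |D⁺f| is a strong upper gradient of f: for every forward absolutely continuous curve γ: [0,1] → X and all 0 ≤ t₁ < t₂ ≤ 1, f(γ(t₂)) − f(γ(t₁)) ≤ ∫_{t₁}^{t₂} |D⁺f|(γ(s)) |γ'₊|(s) ds. -/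
open Filter MeasureTheory

/-- The forward metric derivative `|γ'₊|(s) = lim_{h→0⁺} d(γ(s),γ(s+h))/h`
(as a right-hand limsup, which coincides with the limit wherever it exists). -/
noncomputable def fwdMetricDeriv {X : Type*} (d : X → X → ENNReal) (γ : ℝ → X) (s : ℝ) :
    ENNReal :=
  Filter.limsup (fun h : ℝ => d (γ s) (γ (s + h)) / ENNReal.ofReal h)
    (nhdsWithin 0 (Set.Ioi (0 : ℝ)))

open Set

-- Lebesgue differentiation, right-handed version
lemma aux_ftc (g : ℝ → ℝ) (hg : Integrable g) :
    ∀ᵐ s : ℝ, Tendsto (fun h => (∫ u in s..(s+h), g u) / h) (nhdsWithin 0 (Set.Ioi (0:ℝ)))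
      (nhds (g s)) := by
  filter_upwards [IsUnifLocDoublingMeasure.ae_tendsto_average_norm_sub
    (μ := volume) (hg.locallyIntegrable) 1] with s hs
  have hδ : Tendsto (fun h : ℝ => h / 2) (nhdsWithin 0 (Set.Ioi (0:ℝ)))
      (nhdsWithin 0 (Set.Ioi (0:ℝ))) := by
    rw [tendsto_nhdsWithin_iff]
    constructor
    · exact ((continuous_id.div_const (2:ℝ)).tendsto' 0 0 (by norm_num)).mono_left
        nhdsWithin_le_nhds
    · filter_upwards [self_mem_nhdsWithin] with h (hh : (0:ℝ) < h)
      exact half_pos hh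
  have hmem : ∀ᶠ h in nhdsWithin 0 (Set.Ioi (0:ℝ)),
      s ∈ Metric.closedBall (s + h/2) (1 * (h/2)) := by
    filter_upwards [self_mem_nhdsWithin] with h (hh : (0:ℝ) < h)
    simp only [Metric.mem_closedBall, Real.dist_eq, one_mul]
    rw [abs_of_nonpos (by linarith)]
    linarith
  have htend := hs (fun h : ℝ => s + h/2) (fun h : ℝ => h/2) hδ hmem
  rw [tendsto_iff_dist_tendsto_zero]
  refine squeeze_zero' (Eventually.of_forall fun h => dist_nonneg) ?_ htend
  filter_upwards [self_mem_nhdsWithin] with h (hh : (0:ℝ) < h)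
  have hball : Metric.closedBall (s + h/2) (h/2) = Icc s (s+h) := by
      rw [Real.closedBall_eq_Icc]; congr 1 <;> ring
  have hvol : (volume (Icc s (s+h))).toReal = h := by
    rw [Real.volume_Icc]
    simp only [add_sub_cancel_left]
    exact ENNReal.toReal_ofReal hh.le
  have hintIcc : ∫ u in s..(s+h), g u = ∫ u in Icc s (s+h), g u := by
    rw [intervalIntegral.integral_of_le (by linarith), ← integral_Icc_eq_integral_Ioc]
  have havg : (⨍ y in Metric.closedBall (s + h/2) (h/2), ‖g y - g s‖ ∂volume)
      = h⁻¹ * ∫ y in Icc s (s+h), ‖g y - g s‖ := by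
    rw [hball, setAverage_eq, measureReal_def, hvol, smul_eq_mul]
  rw [havg, Real.dist_eq, hintIcc]
  have hgint : IntegrableOn g (Icc s (s+h)) := hg.integrableOn
  have hsub : ∫ y in Icc s (s+h), (g y - g s) =
      (∫ y in Icc s (s+h), g y) - h * g s := by
    rw [integral_sub hgint (integrable_const _), setIntegral_const, measureReal_def, hvol, smul_eq_mul]
  have heq : (∫ u in Icc s (s+h), g u) / h - g s
      = h⁻¹ * ∫ y in Icc s (s+h), (g y - g s) := by
    rw [hsub]; field_simp
  rw [heq, abs_mul, abs_of_nonneg (inv_nonneg.2 hh.le)]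
  rw [← Real.norm_eq_abs]
  exact mul_le_mul_of_nonneg_left
    (norm_integral_le_integral_norm (fun y => g y - g s)) (inv_nonneg.2 hh.le)

lemma aux_ptwise {X : Type*} (d : X → X → ENNReal)
    (hzero : ∀ x y : X, d x y = 0 ↔ x = y)
    (htri : ∀ x y z : X, d x z ≤ d x y + d y z)
    (htheta : ∃ Θ : X → ℝ → ℝ, (∀ x r, 0 < r → 1 ≤ Θ x r) ∧
      (∀ x, MonotoneOn (Θ x) (Set.Ioi (0 : ℝ))) ∧
      (∀ x r, 0 < r →
        reversibility d {y | d x y < ENNReal.ofReal r} ≤ ENNReal.ofReal (Θ x r)))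
    (f : X → ℝ) (C : ℝ)
    (hLip : ∀ x y : X, ENNReal.ofReal (f y - f x) ≤ ENNReal.ofReal C * d x y)
    (γ : ℝ → X) (s L : ℝ)
    (hF : Tendsto (fun h => (f (γ (s+h)) - f (γ s)) / h) (nhdsWithin 0 (Set.Ioi (0:ℝ)))
      (nhds L))
    (hd0 : Tendsto (fun h => d (γ s) (γ (s+h))) (nhdsWithin 0 (Set.Ioi (0:ℝ))) (nhds 0))
    (hfin : fwdMetricDeriv d γ s ≠ ⊤)
    (hdfin : ∀ᶠ h in nhdsWithin 0 (Set.Ioi (0:ℝ)), d (γ s) (γ (s+h)) ≠ ⊤) :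
    ENNReal.ofReal L ≤ ascSlope d f (γ s) * fwdMetricDeriv d γ s := by
  letI : TopologicalSpace X := asymTop d
  set x := γ s with hx
  set u : ℝ → ENNReal := fun h => ENNReal.ofReal (f (γ (s+h)) - f x) / d x (γ (s+h)) with hu
  set v : ℝ → ENNReal := fun h => d x (γ (s+h)) / ENNReal.ofReal h with hv
  -- the curve converges to x in the asymmetric topology
  have hback : Tendsto (fun h => d (γ (s+h)) x) (nhdsWithin 0 (Set.Ioi (0:ℝ))) (nhds 0) := by
    obtain ⟨Θ, hΘ1, -, hΘ3⟩ := htheta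
    set l : ENNReal := ENNReal.ofReal (Θ x 1) + 1 with hl
    have hlt : reversibility d {y | d x y < ENNReal.ofReal 1} < l :=
      lt_of_le_of_lt (hΘ3 x 1 one_pos) (ENNReal.lt_add_right ENNReal.ofReal_ne_top one_ne_zero)
    obtain ⟨m, hmS, hml⟩ := sInf_lt_iff.1 hlt
    have hxB : x ∈ {y | d x y < ENNReal.ofReal 1} := by
      simp only [Set.mem_setOf_eq, (hzero x x).2 rfl]
      simp
    have hkey : ∀ y, d x y < ENNReal.ofReal 1 → d y x ≤ l * d x y := by
      intro y hy
      exact le_trans (hmS.2 y hy x hxB) (mul_le_mul_left hml.le _)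
    have hev : ∀ᶠ h in nhdsWithin 0 (Set.Ioi (0:ℝ)),
        d (γ (s+h)) x ≤ l * d x (γ (s+h)) := by
      filter_upwards [hd0.eventually_lt_const (by simp : (0:ENNReal) < ENNReal.ofReal 1)]
        with h hh
      exact hkey _ hh
    have hmul : Tendsto (fun h => l * d x (γ (s+h))) (nhdsWithin 0 (Set.Ioi (0:ℝ)))
        (nhds 0) := by
      have := ENNReal.Tendsto.const_mul hd0 (Or.inr (by simp [hl] : l ≠ ⊤))
      simpa using this
    exact tendsto_of_tendsto_of_tendsto_of_le_of_le' tendsto_const_nhds hmul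
      (Eventually.of_forall fun h => zero_le) hev
  have htendx : Tendsto (fun h => γ (s+h)) (nhdsWithin 0 (Set.Ioi (0:ℝ)))
      (@nhds X (asymTop d) x) := by
    rw [asymTop, TopologicalSpace.nhds_generateFrom]
    simp only [tendsto_iInf, tendsto_principal]
    rintro S ⟨hxS, hS | hS⟩
    · obtain ⟨z, r, -, rfl⟩ := hS
      have hzx : d z x < r := hxS
      filter_upwards [hd0.eventually_lt_const (tsub_pos_iff_lt.2 hzx)] with h hh
      have : d z (γ (s+h)) < d z x + (r - d z x) :=
        lt_of_le_of_lt (htri z x _) (ENNReal.add_lt_add_left (hzx.trans_le le_top).ne hh)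
      rwa [add_tsub_cancel_of_le hzx.le] at this
    · obtain ⟨z, r, -, rfl⟩ := hS
      have hxz : d x z < r := hxS
      filter_upwards [hback.eventually_lt_const (tsub_pos_iff_lt.2 hxz)] with h hh
      have : d (γ (s+h)) z < (r - d x z) + d x z :=
        lt_of_le_of_lt (htri _ x z) (ENNReal.add_lt_add_right (hxz.trans_le le_top).ne hh)
      rwa [tsub_add_cancel_of_le hxz.le] at this
  -- bound the slope factor
  have husC : ∀ h, u h ≤ ENNReal.ofReal C :=
    fun h => ENNReal.div_le_of_le_mul (hLip x (γ (s+h)))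
  have hlimsup_u_top : Filter.limsup u (nhdsWithin 0 (Set.Ioi (0:ℝ))) ≠ ⊤ :=
    ((Filter.limsup_le_of_le (by isBoundedDefault) (Eventually.of_forall husC)).trans_lt
      ENNReal.ofReal_lt_top).ne
  have hlimsup_u : Filter.limsup u (nhdsWithin 0 (Set.Ioi (0:ℝ))) ≤ ascSlope d f x := by
    refine le_of_forall_gt_imp_ge_of_dense fun c hc => ?_
    have hc0 : 0 < c := lt_of_le_of_lt zero_le hc
    have hev := Filter.eventually_lt_of_limsup_lt hc
    rw [eventually_nhdsWithin_iff] at hev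
    refine Filter.limsup_le_of_le (by isBoundedDefault) ?_
    filter_upwards [htendx.eventually hev] with h hh
    by_cases hxx : γ (s+h) = x
    · have : u h = 0 := by
        simp [hu, hxx, ENNReal.ofReal_zero]
      rw [this]; exact hc0.le
    · exact (hh hxx).le
  -- rewrite the difference quotient as a product
  have hkeyeq : ∀ᶠ h in nhdsWithin 0 (Set.Ioi (0:ℝ)),
      ENNReal.ofReal ((f (γ (s+h)) - f x) / h) = u h * v h := by
    filter_upwards [hdfin, self_mem_nhdsWithin] with h hdf (hh : (0:ℝ) < h)
    rw [ENNReal.ofReal_div_of_pos hh]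
    rcases eq_or_ne (γ (s+h)) x with hxx | hxx
    · rw [hu, hv]
      simp only [hxx, sub_self, ENNReal.ofReal_zero, ENNReal.zero_div, zero_mul]
    · have hd0' : d x (γ (s+h)) ≠ 0 := fun h0 => hxx ((hzero _ _).1 h0).symm
      have : u h * v h = ENNReal.ofReal (f (γ (s+h)) - f x) *
          ((d x (γ (s+h)))⁻¹ * d x (γ (s+h))) * (ENNReal.ofReal h)⁻¹ := by
        rw [hu, hv]
        simp only [div_eq_mul_inv]
        ring
      rw [this, ENNReal.inv_mul_cancel hd0' hdf, mul_one, div_eq_mul_inv]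
  have hofL : Tendsto (fun h => ENNReal.ofReal ((f (γ (s+h)) - f x) / h))
      (nhdsWithin 0 (Set.Ioi (0:ℝ))) (nhds (ENNReal.ofReal L)) := ENNReal.tendsto_ofReal hF
  have hL : ENNReal.ofReal L =
      Filter.limsup (fun h => u h * v h) (nhdsWithin 0 (Set.Ioi (0:ℝ))) := by
    rw [← Filter.limsup_congr hkeyeq]
    exact (hofL.limsup_eq).symm
  rw [hL]
  have hprod : Filter.limsup (fun h => u h * v h) (nhdsWithin 0 (Set.Ioi (0:ℝ))) ≤
      Filter.limsup u (nhdsWithin 0 (Set.Ioi (0:ℝ))) *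
      Filter.limsup v (nhdsWithin 0 (Set.Ioi (0:ℝ))) := by
    have := ENNReal.limsup_mul_le' (u := u) (v := v) (f := nhdsWithin 0 (Set.Ioi (0:ℝ)))
      (Or.inr hfin) (Or.inl hlimsup_u_top)
    simpa [Pi.mul_def] using this
  exact hprod.trans (mul_le_mul' hlimsup_u le_rfl)


/-- If `f` is forward Lipschitz on a forward extended metric space, then the
ascending slope `|D⁺f|` is a strong upper gradient of `f`: for every forward absolutely
continuous curve `γ : [0,1] → X` and all `0 ≤ t₁ < t₂ ≤ 1`,
`f(γ(t₂)) − f(γ(t₁)) ≤ ∫_{t₁}^{t₂} |D⁺f|(γ(s)) |γ'₊|(s) ds`. -/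
theorem stmt_13 {X : Type*} (d : X → X → ENNReal)
    (hzero : ∀ x y : X, d x y = 0 ↔ x = y)
    (htri : ∀ x y z : X, d x z ≤ d x y + d y z)
    (htheta : ∃ Θ : X → ℝ → ℝ, (∀ x r, 0 < r → 1 ≤ Θ x r) ∧
      (∀ x, MonotoneOn (Θ x) (Set.Ioi (0 : ℝ))) ∧
      (∀ x r, 0 < r →
        reversibility d {y | d x y < ENNReal.ofReal r} ≤ ENNReal.ofReal (Θ x r)))
    (f : X → ℝ) (C : ℝ) (hC : 0 ≤ C)
    (hLip : ∀ x y : X, ENNReal.ofReal (f y - f x) ≤ ENNReal.ofReal C * d x y)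
    (γ : ℝ → X)
    (hγ : ∃ g : ℝ → ℝ, (∀ s, 0 ≤ g s) ∧ IntegrableOn g (Set.Icc (0 : ℝ) 1) ∧
      ∀ t₁ t₂ : ℝ, t₁ ∈ Set.Icc (0 : ℝ) 1 → t₂ ∈ Set.Icc (0 : ℝ) 1 → t₁ ≤ t₂ →
        d (γ t₁) (γ t₂) ≤ ENNReal.ofReal (∫ s in t₁..t₂, g s)) :
    ∀ t₁ t₂ : ℝ, t₁ ∈ Set.Icc (0 : ℝ) 1 → t₂ ∈ Set.Icc (0 : ℝ) 1 → t₁ < t₂ →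
      ENNReal.ofReal (f (γ t₂) - f (γ t₁)) ≤
        ∫⁻ s in Set.Icc t₁ t₂, ascSlope d f (γ s) * fwdMetricDeriv d γ s := by
  intro t₁ t₂ ht₁ ht₂ hlt
  obtain ⟨g, hg0, hgint, hgd⟩ := hγ
  set g₁ : ℝ → ℝ := (Set.Icc (0:ℝ) 1).indicator g with hg₁def
  have hg₁0 : ∀ s, 0 ≤ g₁ s := fun s => Set.indicator_apply_nonneg (fun _ => hg0 s)
  have hg₁int : Integrable g₁ := (integrable_indicator_iff measurableSet_Icc).2 hgint
  have hgd₁ : ∀ a b : ℝ, a ∈ Icc (0:ℝ) 1 → b ∈ Icc (0:ℝ) 1 → a ≤ b →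
      d (γ a) (γ b) ≤ ENNReal.ofReal (∫ u in a..b, g₁ u) := by
    intro a b ha hb hab
    have hsub : Ioc a b ⊆ Icc (0:ℝ) 1 := fun u hu => ⟨ha.1.trans hu.1.le, hu.2.trans hb.2⟩
    have : ∫ u in a..b, g₁ u = ∫ u in a..b, g u := by
      rw [intervalIntegral.integral_of_le hab, intervalIntegral.integral_of_le hab,
        setIntegral_indicator measurableSet_Icc, Set.inter_eq_left.2 hsub]
    rw [this]
    exact hgd a b ha hb hab
  set q : ℝ → ℝ := fun t => max 0 (min 1 t) with hqdef
  have hqmono : Monotone q := fun a b hab => max_le_max le_rfl (min_le_min le_rfl hab)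
  have hqmem : ∀ t, q t ∈ Icc (0:ℝ) 1 := fun t =>
    ⟨le_max_left _ _, max_le zero_le_one (min_le_left _ _)⟩
  have hqid : ∀ t ∈ Icc (0:ℝ) 1, q t = t := fun t ht => by
    rw [hqdef]; simp only [min_eq_right ht.2, max_eq_right ht.1]
  set F : ℝ → ℝ := fun t => f (γ t) with hFdef
  set G : ℝ → ℝ := fun t => ∫ u in (0:ℝ)..(q t), g₁ u with hGdef
  set φ : ℝ → ℝ := fun t => C * G t - F (q t) with hφdef
  have hGdiff : ∀ a b : ℝ, a ≤ b → G b - G a = ∫ u in (q a)..(q b), g₁ u := by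
    intro a b hab
    have h1 := intervalIntegral.integral_add_adjacent_intervals
      (a := (0:ℝ)) (b := q a) (c := q b)
      hg₁int.intervalIntegrable hg₁int.intervalIntegrable
    rw [hGdef]; simp only [← h1]; ring
  have hFd : ∀ a b : ℝ, a ∈ Icc (0:ℝ) 1 → b ∈ Icc (0:ℝ) 1 → a ≤ b →
      F b - F a ≤ C * ∫ u in a..b, g₁ u := by
    intro a b ha hb hab
    have hint0 : 0 ≤ ∫ u in a..b, g₁ u :=
      intervalIntegral.integral_nonneg hab fun u _ => hg₁0 u
    have := (hLip (γ a) (γ b)).trans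
      (mul_le_mul_right (hgd₁ a b ha hb hab) (ENNReal.ofReal C))
    rw [← ENNReal.ofReal_mul hC] at this
    exact (ENNReal.ofReal_le_ofReal_iff (mul_nonneg hC hint0)).1 this
  have hφmono : Monotone φ := by
    intro a b hab
    have h1 := hFd (q a) (q b) (hqmem a) (hqmem b) (hqmono hab)
    have h2 : C * (G b - G a) = C * ∫ u in (q a)..(q b), g₁ u := by
      rw [hGdiff a b hab]
    rw [hφdef]
    simp only
    nlinarith [h2]
  set D : ℝ → ℝ := fun x => (Measure.rnDeriv hφmono.stieltjesFunction.measure volume x).toReal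
    with hDdef
  have hD0 : ∀ x, 0 ≤ D x := fun x => ENNReal.toReal_nonneg
  have hφD : ∀ᵐ x_1, HasDerivAt φ (D x_1) x_1 := hφmono.ae_hasDerivAt
  have hGd := aux_ftc g₁ hg₁int
  -- the key pointwise inequality
  have key : ∀ᵐ s, s ∈ Set.Ioo t₁ t₂ →
      ENNReal.ofReal (C * g₁ s - D s) ≤ ascSlope d f (γ s) * fwdMetricDeriv d γ s := by
    filter_upwards [hφD, hGd] with s hφs hGs hsmem
    have hs0 : 0 < s := lt_of_le_of_lt ht₁.1 hsmem.1
    have hs1 : s < 1 := lt_of_lt_of_le hsmem.2 ht₂.2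
    have hsI : s ∈ Icc (0:ℝ) 1 := ⟨hs0.le, hs1.le⟩
    have hqs : q s = s := hqid s hsI
    have ev1 : ∀ᶠ h in nhdsWithin 0 (Set.Ioi (0:ℝ)), 0 < h ∧ s + h ≤ 1 := by
      filter_upwards [Ioo_mem_nhdsGT_of_mem ⟨le_rfl, sub_pos.2 hs1⟩] with h hh
      exact ⟨hh.1, by have := hh.2; simp only [Set.mem_Ioo] at *; linarith⟩
    have hqsh : ∀ᶠ h in nhdsWithin 0 (Set.Ioi (0:ℝ)), q (s+h) = s + h := by
      filter_upwards [ev1] with h hh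
      exact hqid _ ⟨by linarith [hh.1], hh.2⟩
    have hA : Tendsto (fun h => (G (s+h) - G s) / h) (nhdsWithin 0 (Set.Ioi (0:ℝ)))
        (nhds (g₁ s)) := by
      apply hGs.congr'
      filter_upwards [ev1, hqsh] with h hh hq'
      rw [hGdiff s (s+h) (by linarith [hh.1]), hqs, hq']
    have hφ' : Tendsto (fun h => (φ (s+h) - φ s) / h) (nhdsWithin 0 (Set.Ioi (0:ℝ)))
        (nhds (D s)) := by
      have h1 : Tendsto (fun h : ℝ => s + h) (nhdsWithin 0 (Set.Ioi (0:ℝ)))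
          (nhdsWithin s {s}ᶜ) := by
        rw [tendsto_nhdsWithin_iff]
        constructor
        · exact ((continuous_const.add continuous_id).tendsto' 0 s (by simp)).mono_left
            nhdsWithin_le_nhds
        · filter_upwards [self_mem_nhdsWithin] with h (hh : (0:ℝ) < h)
          simp only [Set.mem_compl_iff, Set.mem_singleton_iff]
          intro hcon; linarith
      have h2 := (hasDerivAt_iff_tendsto_slope.1 hφs).comp h1
      apply h2.congr'
      filter_upwards [self_mem_nhdsWithin] with h (hh : (0:ℝ) < h)
      simp only [Function.comp_apply, slope_def_field]
      rw [div_eq_div_iff (by linarith) (by linarith)]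
      ring
    have hF' : Tendsto (fun h => (F (s+h) - F s) / h) (nhdsWithin 0 (Set.Ioi (0:ℝ)))
        (nhds (C * g₁ s - D s)) := by
      have := (hA.const_mul C).sub hφ'
      apply this.congr'
      filter_upwards [ev1, hqsh] with h hh hq'
      have : φ (s+h) - φ s = C * (G (s+h) - G s) - (F (s+h) - F s) := by
        rw [hφdef]; simp only [hq', hqs]; ring
      rw [this]
      field_simp
      ring
    have hGto0 : Tendsto (fun h => G (s+h) - G s) (nhdsWithin 0 (Set.Ioi (0:ℝ)))
        (nhds 0) := by
      have h0 : Tendsto (fun h : ℝ => h) (nhdsWithin 0 (Set.Ioi (0:ℝ))) (nhds 0) :=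
        tendsto_id.mono_left nhdsWithin_le_nhds
      have := hA.mul h0
      rw [mul_zero] at this
      apply this.congr'
      filter_upwards [self_mem_nhdsWithin] with h (hh : (0:ℝ) < h)
      field_simp
    have hdb : ∀ᶠ h in nhdsWithin 0 (Set.Ioi (0:ℝ)),
        d (γ s) (γ (s+h)) ≤ ENNReal.ofReal (G (s+h) - G s) := by
      filter_upwards [ev1, hqsh] with h hh hq'
      rw [hGdiff s (s+h) (by linarith [hh.1]), hqs, hq']
      exact hgd₁ s (s+h) hsI ⟨by linarith [hh.1], hh.2⟩ (by linarith [hh.1])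
    have hd0 : Tendsto (fun h => d (γ s) (γ (s+h))) (nhdsWithin 0 (Set.Ioi (0:ℝ)))
        (nhds 0) := by
      have hof : Tendsto (fun h => ENNReal.ofReal (G (s+h) - G s))
          (nhdsWithin 0 (Set.Ioi (0:ℝ))) (nhds 0) := by
        have := ENNReal.tendsto_ofReal hGto0
        simpa using this
      exact tendsto_of_tendsto_of_tendsto_of_le_of_le' tendsto_const_nhds hof
        (Eventually.of_forall fun h => zero_le) hdb
    have hdfin : ∀ᶠ h in nhdsWithin 0 (Set.Ioi (0:ℝ)), d (γ s) (γ (s+h)) ≠ ⊤ := by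
      filter_upwards [hdb] with h hh
      exact (hh.trans_lt ENNReal.ofReal_lt_top).ne
    have hfin : fwdMetricDeriv d γ s ≠ ⊤ := by
      have hev : ∀ᶠ h in nhdsWithin 0 (Set.Ioi (0:ℝ)),
          d (γ s) (γ (s+h)) / ENNReal.ofReal h ≤ ENNReal.ofReal ((G (s+h) - G s)/h) := by
        filter_upwards [hdb, self_mem_nhdsWithin] with h hh (hh' : (0:ℝ) < h)
        rw [ENNReal.ofReal_div_of_pos hh']
        exact ENNReal.div_le_div_right hh _
      have hof := ENNReal.tendsto_ofReal hA
      have h1 : fwdMetricDeriv d γ s ≤ ENNReal.ofReal (g₁ s) := by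
        rw [fwdMetricDeriv, ← hof.limsup_eq]
        exact Filter.limsup_le_limsup hev
      exact (h1.trans_lt ENNReal.ofReal_lt_top).ne
    exact aux_ptwise d hzero htri htheta f C hLip γ s _ hF' hd0 hfin hdfin
  -- assemble the integral bound
  have hrIoc : volume.restrict (Icc t₁ t₂) = volume.restrict (Ioc t₁ t₂) :=
    (Measure.restrict_congr_set Ioc_ae_eq_Icc).symm
  have hrIoo : volume.restrict (Icc t₁ t₂) = volume.restrict (Ioo t₁ t₂) :=
    (Measure.restrict_congr_set Ioo_ae_eq_Icc).symm
  set w : ℝ → ENNReal := fun sx => ENNReal.ofReal (D sx) with hwdef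
  have hwmeas : Measurable w :=
    (Measure.measurable_rnDeriv _ _).ennreal_toReal.ennreal_ofReal
  set P : ENNReal := ∫⁻ sx in Icc t₁ t₂, ENNReal.ofReal (C * g₁ sx) with hPdef
  set Q : ENNReal := ∫⁻ sx in Icc t₁ t₂, w sx with hQdef
  have hq1 : q t₁ = t₁ := hqid t₁ ht₁
  have hq2 : q t₂ = t₂ := hqid t₂ ht₂
  have hP : P = ENNReal.ofReal (C * (G t₂ - G t₁)) := by
    have hint : Integrable (fun u => C * g₁ u) (volume.restrict (Ioc t₁ t₂)) :=
      (hg₁int.const_mul C).integrableOn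
    have hnn : 0 ≤ᵐ[volume.restrict (Ioc t₁ t₂)] fun u => C * g₁ u :=
      Eventually.of_forall fun u => mul_nonneg hC (hg₁0 u)
    rw [hPdef, hrIoc, ← ofReal_integral_eq_lintegral_ofReal hint hnn]
    congr 1
    rw [hGdiff t₁ t₂ hlt.le, hq1, hq2, intervalIntegral.integral_of_le hlt.le,
      ← integral_const_mul]
  have hQ' : Q ≤ ENNReal.ofReal (φ t₂ - φ t₁) := by
    have h1 : Q ≤ ∫⁻ sx in Ioo t₁ t₂, Measure.rnDeriv hφmono.stieltjesFunction.measure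
        volume sx := by
      rw [hQdef, hrIoo]
      exact lintegral_mono fun sx => ENNReal.ofReal_toReal_le
    have h2 := Measure.setLIntegral_rnDeriv_le (μ := hφmono.stieltjesFunction.measure)
      (ν := volume) (Ioo t₁ t₂)
    have h3 : hφmono.stieltjesFunction.measure (Ioo t₁ t₂) ≤
        ENNReal.ofReal (φ t₂ - φ t₁) := by
      rw [StieltjesFunction.measure_Ioo]
      apply ENNReal.ofReal_le_ofReal
      have hup : Function.leftLim (hφmono.stieltjesFunction : ℝ → ℝ) t₂ ≤ φ t₂ := by
        have hm : Monotone (hφmono.stieltjesFunction : ℝ → ℝ) :=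
          hφmono.stieltjesFunction.mono
        refine le_of_tendsto (hm.tendsto_leftLim t₂) ?_
        filter_upwards [self_mem_nhdsWithin] with uu (huu : uu < t₂)
        rw [hφmono.stieltjesFunction_eq]
        exact hφmono.rightLim_le huu
      have hlo : φ t₁ ≤ (hφmono.stieltjesFunction : ℝ → ℝ) t₁ := by
        rw [hφmono.stieltjesFunction_eq]
        exact hφmono.le_rightLim le_rfl
      linarith
    exact h1.trans (h2.trans h3)
  have hFdiffeq : F t₂ - F t₁ = C * (G t₂ - G t₁) - (φ t₂ - φ t₁) := by
    rw [hφdef]; simp only [hq1, hq2]; ring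
  have step1 : ENNReal.ofReal (f (γ t₂) - f (γ t₁)) ≤ P - Q := by
    have : ENNReal.ofReal (f (γ t₂) - f (γ t₁)) = P - ENNReal.ofReal (φ t₂ - φ t₁) := by
      have hφnn : 0 ≤ φ t₂ - φ t₁ := sub_nonneg.2 (hφmono hlt.le)
      show ENNReal.ofReal (F t₂ - F t₁) = _
      rw [hFdiffeq, ENNReal.ofReal_sub _ hφnn, hP]
    rw [this]
    exact tsub_le_tsub_left hQ' P
  have step2 : P - Q ≤ ∫⁻ sx in Icc t₁ t₂, (ENNReal.ofReal (C * g₁ sx) - w sx) := by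
    rw [tsub_le_iff_right, hQdef, ← lintegral_add_right _ hwmeas]
    exact lintegral_mono fun sx => le_tsub_add
  have step3 : ∫⁻ sx in Icc t₁ t₂, (ENNReal.ofReal (C * g₁ sx) - w sx) ≤
      ∫⁻ sx in Icc t₁ t₂, ascSlope d f (γ sx) * fwdMetricDeriv d γ sx := by
    apply lintegral_mono_ae
    rw [ae_restrict_iff' measurableSet_Icc]
    have hends : ∀ᵐ sx : ℝ, sx ∉ ({t₁, t₂} : Set ℝ) := by
      rw [← measure_eq_zero_iff_ae_notMem]
      exact measure_union_null (measure_singleton _) (measure_singleton _)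
    filter_upwards [key, hends] with sx hks hsx hmem
    have hIoo : sx ∈ Set.Ioo t₁ t₂ := by
      simp only [Set.mem_insert_iff, Set.mem_singleton_iff, not_or] at hsx
      exact ⟨lt_of_le_of_ne hmem.1 (Ne.symm hsx.1), lt_of_le_of_ne hmem.2 hsx.2⟩
    calc ENNReal.ofReal (C * g₁ sx) - w sx
        = ENNReal.ofReal (C * g₁ sx - D sx) := by
          rw [hwdef, ENNReal.ofReal_sub _ (hD0 sx)]
      _ ≤ _ := hks hIoo
  exact step1.trans (step2.trans step3)
end

section
/- (Monotonicity of minimizing distances for the Hopf–Lax semigroup.) Let (X,τ,d) be a forward extended Polish space, f: X → (−∞,∞] proper, p ∈ (1,∞), and for t > 0 set Q_t f(y) = inf_x [f(x) + d(x,y)^p/(p t^{p−1})]. Define 𝔡⁺(y,t) (resp. 𝔡⁻(y,t)) as the supremum of limsup_i d(x_i,y) (resp. infimum of liminf_i d(x_i,y)) over minimizing sequences (x_i) of x ↦ f(x) + d(x,y)^p/(p t^{p−1}). Then for every y with Q_t f(y) > −∞ on (0,t_*(y)) and all 0 < s < t < t_*(y), one has 𝔡⁺(y,s) ≤ 𝔡⁻(y,t);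 in particular both functions t ↦ 𝔡±(y,t) are non-decreasing. -/
open Filter

/-- `(X, τ, d)` is a forward extended Polish space. -/
structure IsForwardExtendedPolish (X : Type*) [TopologicalSpace X]
    (d : X → X → ENNReal) : Prop where
  zero_iff : ∀ x y : X, d x y = 0 ↔ x = y
  triangle : ∀ x y z : X, d x z ≤ d x y + d y z
  theta : ∃ Θ : X → ℝ → ℝ, (∀ x r, 0 < r → 1 ≤ Θ x r) ∧
    (∀ x, MonotoneOn (Θ x) (Set.Ioi (0 : ℝ))) ∧
    (∀ x r, 0 < r →
      reversibility d {y | d x y < ENNReal.ofReal r} ≤ ENNReal.ofReal (Θ x r))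
  fwdComplete : ∀ u : ℕ → X,
    (∀ ε : ENNReal, 0 < ε → ∃ N, ∀ i j, N ≤ i → i ≤ j → d (u i) (u j) < ε) →
    ∃ x : X, Tendsto (fun i => d x (u i)) atTop (nhds 0) ∧
      Tendsto (fun i => d (u i) x) atTop (nhds 0)
  polish : PolishSpace X
  backward_tendsto : ∀ (u : ℕ → X) (x : X),
    Tendsto (fun i => d (u i) x) atTop (nhds 0) → Tendsto u atTop (nhds x)
  lsc : LowerSemicontinuous fun p : X × X => d p.1 p.2

/-- The Hopf–Lax integrand `Φ(t,x,y) = f(x) + d(x,y)^p/(p t^{p−1})`. -/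
noncomputable def hlCost {X : Type*} (d : X → X → ENNReal) (p : ℝ) (f : X → EReal)
    (t : ℝ) (x y : X) : EReal :=
  f x + ((d x y ^ p / ENNReal.ofReal (p * t ^ (p - 1)) : ENNReal) : EReal)

/-- The Hopf–Lax semigroup `Q_t f(y) = inf_x Φ(t,x,y)`. -/
noncomputable def hlQ {X : Type*} (d : X → X → ENNReal) (p : ℝ) (f : X → EReal)
    (t : ℝ) (y : X) : EReal :=
  ⨅ x : X, hlCost d p f t x y

/-- `𝔡⁺(y,t)`: the supremum of `limsup_i d(x_i,y)` over minimizing sequences `(x_i)` of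
`x ↦ Φ(t,x,y)`. -/
noncomputable def hlDPlus {X : Type*} (d : X → X → ENNReal) (p : ℝ) (f : X → EReal)
    (y : X) (t : ℝ) : ENNReal :=
  ⨆ u : {u : ℕ → X //
      Tendsto (fun i => hlCost d p f t (u i) y) atTop (nhds (hlQ d p f t y))},
    Filter.limsup (fun i => d (u.1 i) y) atTop

/-- `𝔡⁻(y,t)`: the infimum of `liminf_i d(x_i,y)` over minimizing sequences `(x_i)` of
`x ↦ Φ(t,x,y)`. -/
noncomputable def hlDMinus {X : Type*} (d : X → X → ENNReal) (p : ℝ) (f : X → EReal)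
    (y : X) (t : ℝ) : ENNReal :=
  ⨅ u : {u : ℕ → X //
      Tendsto (fun i => hlCost d p f t (u i) y) atTop (nhds (hlQ d p f t y))},
    Filter.liminf (fun i => d (u.1 i) y) atTop

namespace HL16

variable {X : Type*} (d : X → X → ENNReal) (f : X → EReal)

lemma den_pos {p t : ℝ} (hp : 1 < p) (ht : 0 < t) : 0 < p * t ^ (p - 1) :=
  mul_pos (by linarith) (Real.rpow_pos_of_pos ht _)

lemma cost_ne_bot {p : ℝ} {x y : X} (hf : f x ≠ ⊥) (t : ℝ) : hlCost d p f t x y ≠ ⊥ := by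
  simp [hlCost, EReal.add_eq_bot_iff, hf, EReal.coe_ennreal_ne_bot]

lemma part_ne_top {p t : ℝ} (hp : 1 < p) (ht : 0 < t) {x y : X} (hd : d x y ≠ ⊤) :
    (d x y ^ p / ENNReal.ofReal (p * t ^ (p - 1)) : ENNReal) ≠ ⊤ :=
  (ENNReal.div_lt_top (ENNReal.rpow_ne_top_of_nonneg (by linarith) hd)
    (ENNReal.ofReal_pos.mpr (den_pos hp ht)).ne').ne

lemma cost_ne_top_parts {p t : ℝ} (hp : 1 < p) (ht : 0 < t) {x y : X} (hf : f x ≠ ⊥)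
    (h : hlCost d p f t x y ≠ ⊤) : f x ≠ ⊤ ∧ d x y ≠ ⊤ := by
  constructor
  · intro hfx
    exact h (by rw [hlCost, hfx, EReal.top_add_of_ne_bot (EReal.coe_ennreal_ne_bot _)])
  · intro hdx
    apply h
    have h1 : (d x y ^ p / ENNReal.ofReal (p * t ^ (p - 1)) : ENNReal) = ⊤ := by
      rw [hdx, ENNReal.top_rpow_of_pos (by linarith), ENNReal.top_div_of_ne_top
        ENNReal.ofReal_ne_top]
    rw [hlCost, h1, EReal.coe_ennreal_top, EReal.add_top_of_ne_bot hf]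

lemma cost_toReal {p t : ℝ} (hp : 1 < p) (ht : 0 < t) {x y : X} (hfb : f x ≠ ⊥)
    (hft : f x ≠ ⊤) (hd : d x y ≠ ⊤) :
    (hlCost d p f t x y).toReal
      = (f x).toReal + (d x y).toReal ^ p / (p * t ^ (p - 1)) := by
  rw [hlCost, EReal.toReal_add hft hfb (by
      simpa using part_ne_top d hp ht hd) (EReal.coe_ennreal_ne_bot _),
    EReal.toReal_coe_ennreal, ENNReal.toReal_div, ENNReal.toReal_rpow,
    ENNReal.toReal_ofReal (den_pos hp ht).le]

lemma q_le_cost_toReal {p t : ℝ} (hp : 1 < p) (ht : 0 < t) {x y : X}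
    (hQb : hlQ d p f t y ≠ ⊥) (hfb : f x ≠ ⊥) (hft : f x ≠ ⊤) (hd : d x y ≠ ⊤) :
    (hlQ d p f t y).toReal ≤ (f x).toReal + (d x y).toReal ^ p / (p * t ^ (p - 1)) := by
  have hle : hlQ d p f t y ≤ hlCost d p f t x y := iInf_le _ x
  have hct : hlCost d p f t x y ≠ ⊤ := by
    rw [hlCost]
    exact (EReal.add_lt_top hft (by simpa using part_ne_top d hp ht hd)).ne
  have := EReal.toReal_le_toReal hle hQb hct
  rwa [cost_toReal d f hp ht hfb hft hd] at this

lemma hlQ_anti {s t : ℝ} (hp : 1 < p) (hs : 0 < s) (hst : s ≤ t) (y : X) :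
    hlQ d p f t y ≤ hlQ d p f s y := by
  refine iInf_mono fun x => ?_
  rw [hlCost, hlCost]
  refine add_le_add le_rfl (EReal.coe_ennreal_le_coe_ennreal_iff.mpr ?_)
  exact ENNReal.div_le_div_left (ENNReal.ofReal_le_ofReal
    (mul_le_mul_of_nonneg_left (Real.rpow_le_rpow hs.le hst (by linarith))
      (by linarith))) _

lemma hlQ_ne_top {p t : ℝ} (hp : 1 < p) (ht : 0 < t) {x₀ y : X} (hf : f x₀ ≠ ⊤)
    (hd : d x₀ y ≠ ⊤) : hlQ d p f t y ≠ ⊤ := by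
  intro h
  have hle : hlQ d p f t y ≤ hlCost d p f t x₀ y := iInf_le _ x₀
  rw [h, top_le_iff, hlCost] at hle
  exact (EReal.add_lt_top hf (by simpa using part_ne_top d hp ht hd)).ne hle

lemma exists_minseq [Nonempty X] (p t : ℝ) (y : X) :
    ∃ u : ℕ → X, Tendsto (fun i => hlCost d p f t (u i) y) atTop (nhds (hlQ d p f t y)) := by
  obtain ⟨w, -, hw, hmem⟩ := exists_seq_tendsto_sInf
    (S := Set.range fun x => hlCost d p f t x y) (Set.range_nonempty _) (OrderBot.bddBelow _)
  choose u hu using fun n => hmem n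
  refine ⟨u, ?_⟩
  rw [hlQ, ← sInf_range]
  exact hw.congr fun n => (hu n).symm

end HL16

namespace HL16
variable {X : Type*} (d : X → X → ENNReal) (f : X → EReal)

lemma minseq_props {p t : ℝ} (hp : 1 < p) (ht : 0 < t) {y : X} (hfbot : ∀ x, f x ≠ ⊥)
    (hQb : hlQ d p f t y ≠ ⊥) (hQt : hlQ d p f t y ≠ ⊤) {u : ℕ → X}
    (hu : Tendsto (fun i => hlCost d p f t (u i) y) atTop (nhds (hlQ d p f t y))) :
    (∀ᶠ i in atTop, f (u i) ≠ ⊤ ∧ d (u i) y ≠ ⊤) ∧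
    Tendsto (fun i => (f (u i)).toReal + (d (u i) y).toReal ^ p / (p * t ^ (p - 1))
      - (hlQ d p f t y).toReal) atTop (nhds 0) := by
  have hev : ∀ᶠ i in atTop, hlCost d p f t (u i) y ≠ ⊤ := by
    filter_upwards [hu.eventually_lt_const (lt_top_iff_ne_top.mpr hQt)] with i hi
    exact hi.ne
  have hfin : ∀ᶠ i in atTop, f (u i) ≠ ⊤ ∧ d (u i) y ≠ ⊤ := by
    filter_upwards [hev] with i hi
    exact cost_ne_top_parts d f hp ht (hfbot _) hi
  refine ⟨hfin, ?_⟩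
  have h1 : Tendsto (fun i => (hlCost d p f t (u i) y).toReal) atTop
      (nhds (hlQ d p f t y).toReal) := (EReal.tendsto_toReal hQt hQb).comp hu
  have h2 : Tendsto (fun i => (f (u i)).toReal + (d (u i) y).toReal ^ p / (p * t ^ (p - 1)))
      atTop (nhds (hlQ d p f t y).toReal) := by
    refine h1.congr' ?_
    filter_upwards [hfin] with i hi
    exact cost_toReal d f hp ht (hfbot _) hi.1 hi.2
  simpa using h2.sub_const (hlQ d p f t y).toReal

lemma key {p s t : ℝ} (hp : 1 < p) (hs : 0 < s) (hst : s < t) {y : X}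
    (hfbot : ∀ x, f x ≠ ⊥)
    (hQsb : hlQ d p f s y ≠ ⊥) (hQst : hlQ d p f s y ≠ ⊤)
    (hQtb : hlQ d p f t y ≠ ⊥) (hQtt : hlQ d p f t y ≠ ⊤)
    {u v : ℕ → X}
    (hu : Tendsto (fun i => hlCost d p f s (u i) y) atTop (nhds (hlQ d p f s y)))
    (hv : Tendsto (fun i => hlCost d p f t (v i) y) atTop (nhds (hlQ d p f t y))) :
    limsup (fun i => d (u i) y) atTop ≤ liminf (fun j => d (v j) y) atTop := by
  have ht : 0 < t := hs.trans hst
  have hp0 : (0:ℝ) < p := by linarith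
  have hσ : 0 < p * s ^ (p - 1) := den_pos hp hs
  have hτ : 0 < p * t ^ (p - 1) := den_pos hp ht
  have hστ : p * s ^ (p - 1) < p * t ^ (p - 1) :=
    mul_lt_mul_of_pos_left (Real.rpow_lt_rpow hs.le hst (by linarith)) hp0
  have hk0 : 0 < 1 / (p * s ^ (p - 1)) - 1 / (p * t ^ (p - 1)) := by
    have := one_div_lt_one_div_of_lt hσ hστ
    linarith
  obtain ⟨hufin, hδ⟩ := minseq_props d f hp hs hfbot hQsb hQst hu
  obtain ⟨hvfin, hη⟩ := minseq_props d f hp ht hfbot hQtb hQtt hv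
  -- pointwise inequalities
  have hkeyi : ∀ᶠ i in atTop, d (u i) y ≠ ⊤ ∧
      (d (u i) y).toReal ^ p * (1 / (p * s ^ (p - 1)) - 1 / (p * t ^ (p - 1))) ≤ (hlQ d p f s y).toReal - (hlQ d p f t y).toReal +
        ((f (u i)).toReal + (d (u i) y).toReal ^ p / (p * s ^ (p - 1)) - (hlQ d p f s y).toReal) := by
    filter_upwards [hufin] with i hi
    refine ⟨hi.2, ?_⟩
    have h1 : (hlQ d p f t y).toReal ≤ (f (u i)).toReal + (d (u i) y).toReal ^ p / (p * t ^ (p - 1)) :=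
      q_le_cost_toReal d f hp ht hQtb (hfbot _) hi.1 hi.2
    have h2 : (d (u i) y).toReal ^ p * (1 / (p * s ^ (p - 1)) - 1 / (p * t ^ (p - 1)))
        = (d (u i) y).toReal ^ p / (p * s ^ (p - 1))
          - (d (u i) y).toReal ^ p / (p * t ^ (p - 1)) := by
      rw [mul_sub, mul_one_div, mul_one_div]
    linarith
  have hkeyj : ∀ᶠ j in atTop, d (v j) y ≠ ⊤ ∧
      (hlQ d p f s y).toReal - (hlQ d p f t y).toReal - ((f (v j)).toReal + (d (v j) y).toReal ^ p / (p * t ^ (p - 1)) - (hlQ d p f t y).toReal)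
        ≤ (d (v j) y).toReal ^ p * (1 / (p * s ^ (p - 1)) - 1 / (p * t ^ (p - 1))) := by
    filter_upwards [hvfin] with j hj
    refine ⟨hj.2, ?_⟩
    have h1 : (hlQ d p f s y).toReal ≤ (f (v j)).toReal + (d (v j) y).toReal ^ p / (p * s ^ (p - 1)) :=
      q_le_cost_toReal d f hp hs hQsb (hfbot _) hj.1 hj.2
    have h2 : (d (v j) y).toReal ^ p * (1 / (p * s ^ (p - 1)) - 1 / (p * t ^ (p - 1)))
        = (d (v j) y).toReal ^ p / (p * s ^ (p - 1))
          - (d (v j) y).toReal ^ p / (p * t ^ (p - 1)) := by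
      rw [mul_sub, mul_one_div, mul_one_div]
    linarith
  -- boundedness of the limsup
  have hbound : limsup (fun i => d (u i) y) atTop ≠ ⊤ := by
    have hM0 : (0:ℝ) ≤ max (((hlQ d p f s y).toReal - (hlQ d p f t y).toReal + 1) / (1 / (p * s ^ (p - 1)) - 1 / (p * t ^ (p - 1)))) 0 := le_max_right _ _
    have hev : ∀ᶠ i in atTop,
        d (u i) y ≤ ENNReal.ofReal ((max (((hlQ d p f s y).toReal - (hlQ d p f t y).toReal + 1) / (1 / (p * s ^ (p - 1)) - 1 / (p * t ^ (p - 1)))) 0) ^ (1 / p)) := by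
      filter_upwards [hkeyi, hδ.eventually_lt_const one_pos] with i hi hδi
      have hDp : (d (u i) y).toReal ^ p ≤ max (((hlQ d p f s y).toReal - (hlQ d p f t y).toReal + 1) / (1 / (p * s ^ (p - 1)) - 1 / (p * t ^ (p - 1)))) 0 := by
        refine le_trans ?_ (le_max_left _ _)
        rw [le_div_iff₀ hk0]
        have := hi.2
        nlinarith
      have hD : (d (u i) y).toReal ≤ (max (((hlQ d p f s y).toReal - (hlQ d p f t y).toReal + 1) / (1 / (p * s ^ (p - 1)) - 1 / (p * t ^ (p - 1)))) 0) ^ (1 / p) := by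
        by_contra hcon
        push_neg at hcon
        have h3 := Real.rpow_lt_rpow (Real.rpow_nonneg hM0 _) hcon hp0
        rw [← Real.rpow_mul hM0, one_div_mul_cancel hp0.ne', Real.rpow_one] at h3
        linarith
      calc d (u i) y = ENNReal.ofReal (d (u i) y).toReal := (ENNReal.ofReal_toReal hi.1).symm
        _ ≤ _ := ENNReal.ofReal_le_ofReal hD
    exact ((limsup_le_of_le (by isBoundedDefault) hev).trans_lt ENNReal.ofReal_lt_top).ne
  -- main argument
  rw [le_liminf_iff]
  intro b hb
  have hbne : b ≠ ⊤ := (hb.trans (lt_top_iff_ne_top.mpr hbound)).ne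
  obtain ⟨b', hb1, hb2⟩ := exists_between hb
  have hb'ne : b' ≠ ⊤ := (hb2.trans (lt_top_iff_ne_top.mpr hbound)).ne
  have hBB' : b.toReal < b'.toReal := (ENNReal.toReal_lt_toReal hbne hb'ne).mpr hb1
  have hBp : b.toReal ^ p < b'.toReal ^ p :=
    Real.rpow_lt_rpow ENNReal.toReal_nonneg hBB' hp0
  have hε : 0 < (1 / (p * s ^ (p - 1)) - 1 / (p * t ^ (p - 1))) * (b'.toReal ^ p - b.toReal ^ p) / 2 :=
    div_pos (mul_pos hk0 (sub_pos.mpr hBp)) two_pos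
  have hfreq : ∃ᶠ i in atTop, b' < d (u i) y :=
    frequently_lt_of_lt_limsup (by isBoundedDefault) hb2
  filter_upwards [hkeyj, hη.eventually_lt_const hε] with j hj hηj
  by_contra hcon
  push_neg at hcon
  have hEj : (d (v j) y).toReal ≤ b.toReal := (ENNReal.toReal_le_toReal hj.1 hbne).mpr hcon
  have hEjp : (d (v j) y).toReal ^ p ≤ b.toReal ^ p :=
    Real.rpow_le_rpow ENNReal.toReal_nonneg hEj hp0.le
  obtain ⟨i, hib, hi⟩ :=
    (hfreq.and_eventually (hkeyi.and (hδ.eventually_lt_const hε))).exists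
  have hDi' : b'.toReal < (d (u i) y).toReal :=
    (ENNReal.toReal_lt_toReal hb'ne hi.1.1).mpr hib
  have hDip : b'.toReal ^ p < (d (u i) y).toReal ^ p :=
    Real.rpow_lt_rpow ENNReal.toReal_nonneg hDi' hp0
  have h1 := hi.1.2
  have h2 := hi.2
  have h3 := hj.2
  nlinarith [mul_lt_mul_of_pos_right hDip hk0, mul_le_mul_of_nonneg_right hEjp hk0.le]

end HL16

/-- monotonicity of the minimizing distances for the Hopf–Lax semigroup:
for `y` with `Q_t f(y) > −∞` on `(0, t_*(y))` and all `0 < s < t < t_*(y)` one has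
`𝔡⁺(y,s) ≤ 𝔡⁻(y,t)`; in particular both `t ↦ 𝔡±(y,t)` are non-decreasing.
(Here `t < t_*(y)` is expressed as `∃ T > t, Q_T f(y) ≠ −∞`.) -/
theorem stmt_16 {X : Type*} [TopologicalSpace X] (d : X → X → ENNReal)
    (hX : IsForwardExtendedPolish X d) (p : ℝ) (hp : 1 < p)
    (f : X → EReal) (hfbot : ∀ x, f x ≠ ⊥) (hfprop : ∃ x, f x ≠ ⊤)
    (y : X) (hyD : ∃ x, f x ≠ ⊤ ∧ d x y ≠ ⊤) :
    (∀ s t : ℝ, 0 < s → s < t → (∃ T : ℝ, t < T ∧ hlQ d p f T y ≠ ⊥) →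
      hlDPlus d p f y s ≤ hlDMinus d p f y t) ∧
    (∀ s t : ℝ, 0 < s → s ≤ t → (∃ T : ℝ, t < T ∧ hlQ d p f T y ≠ ⊥) →
      hlDPlus d p f y s ≤ hlDPlus d p f y t ∧
      hlDMinus d p f y s ≤ hlDMinus d p f y t) := by
  obtain ⟨x₀, hfx₀, hdx₀⟩ := hyD
  have hne : Nonempty X := ⟨x₀⟩
  have key1 : ∀ s t : ℝ, 0 < s → s < t → (∃ T : ℝ, t < T ∧ hlQ d p f T y ≠ ⊥) →
      hlDPlus d p f y s ≤ hlDMinus d p f y t := by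
    rintro s t hs hst ⟨T, hT, hQT⟩
    have ht : 0 < t := hs.trans hst
    have hQsb : hlQ d p f s y ≠ ⊥ := fun h => hQT
      (le_bot_iff.mp (h ▸ HL16.hlQ_anti d f hp hs (by linarith) y))
    have hQtb : hlQ d p f t y ≠ ⊥ := fun h => hQT
      (le_bot_iff.mp (h ▸ HL16.hlQ_anti d f hp ht (by linarith) y))
    have hQst : hlQ d p f s y ≠ ⊤ := HL16.hlQ_ne_top d f hp hs hfx₀ hdx₀
    have hQtt : hlQ d p f t y ≠ ⊤ := HL16.hlQ_ne_top d f hp ht hfx₀ hdx₀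
    unfold hlDPlus hlDMinus
    refine iSup_le fun u => le_iInf fun v => ?_
    exact HL16.key d f hp hs hst hfbot hQsb hQst hQtb hQtt u.2 v.2
  refine ⟨key1, ?_⟩
  rintro s t hs hst hT
  rcases eq_or_lt_of_le hst with rfl | hlt
  · exact ⟨le_rfl, le_rfl⟩
  · have h1 := key1 s t hs hlt hT
    obtain ⟨ut, hut⟩ := HL16.exists_minseq d f p t y
    obtain ⟨us, hus⟩ := HL16.exists_minseq d f p s y
    have hts : hlDMinus d p f y t ≤ hlDPlus d p f y t := by
      have h1 : hlDMinus d p f y t ≤ Filter.liminf (fun i => d (ut i) y) atTop :=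
        iInf_le (fun u : {u : ℕ → X //
          Tendsto (fun i => hlCost d p f t (u i) y) atTop (nhds (hlQ d p f t y))} =>
          Filter.liminf (fun i => d (u.1 i) y) atTop) ⟨ut, hut⟩
      have h3 : Filter.limsup (fun i => d (ut i) y) atTop ≤ hlDPlus d p f y t :=
        le_iSup (fun u : {u : ℕ → X //
          Tendsto (fun i => hlCost d p f t (u i) y) atTop (nhds (hlQ d p f t y))} =>
          Filter.limsup (fun i => d (u.1 i) y) atTop) ⟨ut, hut⟩
      exact le_trans h1 (le_trans liminf_le_limsup h3)
    have hss : hlDMinus d p f y s ≤ hlDPlus d p f y s := by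
      have h1 : hlDMinus d p f y s ≤ Filter.liminf (fun i => d (us i) y) atTop :=
        iInf_le (fun u : {u : ℕ → X //
          Tendsto (fun i => hlCost d p f s (u i) y) atTop (nhds (hlQ d p f s y))} =>
          Filter.liminf (fun i => d (u.1 i) y) atTop) ⟨us, hus⟩
      have h3 : Filter.limsup (fun i => d (us i) y) atTop ≤ hlDPlus d p f y s :=
        le_iSup (fun u : {u : ℕ → X //
          Tendsto (fun i => hlCost d p f s (u i) y) atTop (nhds (hlQ d p f s y))} =>
          Filter.limsup (fun i => d (u.1 i) y) atTop) ⟨us, hus⟩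
      exact le_trans h1 (le_trans liminf_le_limsup h3)
    exact ⟨h1.trans hts, hss.trans h1⟩
end

section
/- (Time derivative of the Hopf–Lax semigroup in the asymmetric setting.) With Q_t f(y) = inf_x [f(x) + d(x,y)^p/(p t^{p−1})] and 𝔡±(y,t) defined via minimizing sequences, for every y ∈ 𝒟(f) the map t ↦ Q_t f(y) is locally Lipschitz on (0, t_*(y)) and its one-sided derivatives satisfy d/dt⁻ [Q_t f(y)] = −(1/q)·𝔡⁻(y,t)^p / t^p and d/dt⁺ [Q_t f(y)] = −(1/q)·𝔡⁺(y,t)^p / t^p, where 1/p + 1/q = 1. In particular t ↦ Q_t f(y) is differentiable at t iff 𝔡⁻(y,t) = 𝔡⁺(y,t). -/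
open Filter

section HL

variable {X : Type*} (d : X → X → ENNReal) (p : ℝ) (f : X → EReal) (y : X)

/-- The "good" set `S`. -/
def hlS : Set X := {x | f x ≠ ⊤ ∧ d x y ≠ ⊤}

/-- The coefficient `c(t) = 1/(p t^(p-1))`. -/
noncomputable def hlc (t : ℝ) : ℝ := (p * t ^ (p - 1))⁻¹

/-- The real-valued cost on `S`. -/
noncomputable def hlPhi (t : ℝ) (x : X) : ℝ :=
  (f x).toReal + (d x y).toReal ^ p * hlc p t

/-- The real-valued Hopf-Lax infimum. -/
noncomputable def hlqr (t : ℝ) : ℝ := ⨅ x : hlS d f y, hlPhi d p f y t x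

variable {d p f y}
variable (hp : 1 < p)
include hp

lemma hlc_den_pos {t : ℝ} (ht : 0 < t) : 0 < p * t ^ (p - 1) :=
  mul_pos (by linarith) (Real.rpow_pos_of_pos ht _)

lemma hlc_pos {t : ℝ} (ht : 0 < t) : 0 < hlc p t := inv_pos.2 (hlc_den_pos hp ht)

lemma hlc_antitone {t s : ℝ} (ht : 0 < t) (hts : t ≤ s) : hlc p s ≤ hlc p t := by
  apply inv_anti₀ (hlc_den_pos hp ht)
  have : t ^ (p - 1) ≤ s ^ (p - 1) :=
    Real.rpow_le_rpow ht.le hts (by linarith)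
  nlinarith

lemma hlc_strict_anti {t s : ℝ} (ht : 0 < t) (hts : t < s) : hlc p s < hlc p t := by
  have h1 : t ^ (p - 1) < s ^ (p - 1) := Real.rpow_lt_rpow ht.le hts (by linarith)
  have : p * t ^ (p - 1) < p * s ^ (p - 1) := by nlinarith
  exact inv_strictAnti₀ (hlc_den_pos hp ht) this

/-- Cost formula on `S`. -/
lemma hlCost_eq_phi {t : ℝ} (ht : 0 < t) {x : X} (hx : x ∈ hlS d f y)
    (hfbot : f x ≠ ⊥) :
    hlCost d p f t x y = ((hlPhi d p f y t x : ℝ) : EReal) := by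
  obtain ⟨hfx, hdx⟩ := hx
  have hden : ENNReal.ofReal (p * t ^ (p - 1)) ≠ 0 := by
    simp [ENNReal.ofReal_eq_zero, not_le, hlc_den_pos hp ht]
  have hnum : d x y ^ p ≠ ⊤ := ENNReal.rpow_ne_top_of_nonneg (by linarith) hdx
  set A : ENNReal := d x y ^ p / ENNReal.ofReal (p * t ^ (p - 1)) with hA
  have hAtop : A ≠ ⊤ := by
    rw [hA, Ne, ENNReal.div_eq_top]
    push_neg
    exact ⟨fun _ => hden, fun h => absurd h hnum⟩
  have hAval : A.toReal = (d x y).toReal ^ p * hlc p t := by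
    rw [hA, ENNReal.toReal_div, ENNReal.toReal_ofReal (hlc_den_pos hp ht).le,
      ← ENNReal.toReal_rpow, div_eq_mul_inv, hlc]
  have hcoe : (A : EReal) = ((A.toReal : ℝ) : EReal) := by
    rw [← ENNReal.ofReal_toReal hAtop, EReal.coe_ennreal_ofReal,
      max_eq_left ENNReal.toReal_nonneg, ENNReal.toReal_ofReal ENNReal.toReal_nonneg]
  rw [hlCost, ← hA, hcoe, hAval, hlPhi, ← EReal.coe_toReal hfx hfbot, ← EReal.coe_add,
    EReal.toReal_coe]

/-- Cost is `⊤` off `S`. -/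
lemma hlCost_eq_top {t : ℝ} (ht : 0 < t) {x : X} (hx : x ∉ hlS d f y)
    (hfbot : f x ≠ ⊥) :
    hlCost d p f t x y = ⊤ := by
  have hden : ENNReal.ofReal (p * t ^ (p - 1)) ≠ 0 := by
    simp [ENNReal.ofReal_eq_zero, not_le, hlc_den_pos hp ht]
  have hden' : ENNReal.ofReal (p * t ^ (p - 1)) ≠ ⊤ := ENNReal.ofReal_ne_top
  rw [hlS, Set.mem_setOf_eq, not_and_or, not_ne_iff, not_ne_iff] at hx
  rcases hx with hfx | hdx
  · rw [hlCost, hfx]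
    apply EReal.top_add_of_ne_bot
    exact EReal.coe_ennreal_ne_bot _
  · rw [hlCost]
    have : d x y ^ p = ⊤ := by
      rw [hdx]; exact ENNReal.top_rpow_of_pos (by linarith)
    rw [this, ENNReal.top_div_of_ne_top hden', EReal.coe_ennreal_top]
    exact EReal.add_top_of_ne_bot hfbot

end HL

section Window
set_option linter.unusedSectionVars false

variable {X : Type*} {d : X → X → ENNReal} {p : ℝ} {f : X → EReal} {y : X} {T : ℝ}
variable (hp : 1 < p) (hfbot : ∀ x, f x ≠ ⊥) (hS : (hlS d f y).Nonempty)
variable (hT : 0 < T) (hQT : hlQ d p f T y ≠ ⊥)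

include hp hfbot

lemma hlQ_eq_iInf_phi {t : ℝ} (ht : 0 < t) :
    hlQ d p f t y = ⨅ x : hlS d f y, ((hlPhi d p f y t x : ℝ) : EReal) := by
  apply le_antisymm
  · exact le_iInf fun x => by
      rw [← hlCost_eq_phi hp ht x.2 (hfbot _)]; exact iInf_le _ x.1
  · refine le_iInf fun x => ?_
    by_cases hx : x ∈ hlS d f y
    · rw [hlCost_eq_phi hp ht hx (hfbot _)]
      exact iInf_le (fun x : hlS d f y => ((hlPhi d p f y t x : ℝ) : EReal)) ⟨x, hx⟩
    · rw [hlCost_eq_top hp ht hx (hfbot _)]; exact le_top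

include hT hQT

lemma hlPhi_lower {x : X} (hx : x ∈ hlS d f y) :
    (hlQ d p f T y).toReal ≤ hlPhi d p f y T x := by
  have h1 : hlQ d p f T y ≤ ((hlPhi d p f y T x : ℝ) : EReal) := by
    rw [hlQ_eq_iInf_phi hp hfbot hT]
    exact iInf_le (fun x : hlS d f y => ((hlPhi d p f y T x : ℝ) : EReal)) ⟨x, hx⟩
  have h2 : hlQ d p f T y ≠ ⊤ := ne_top_of_le_ne_top (EReal.coe_ne_top _) h1
  rw [← EReal.coe_le_coe_iff, EReal.coe_toReal h2 hQT]
  exact h1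

lemma hlPhi_mono_t {t s : ℝ} (ht : 0 < t) (hts : t ≤ s) (x : X) :
    hlPhi d p f y s x ≤ hlPhi d p f y t x := by
  have hR : (0:ℝ) ≤ (d x y).toReal ^ p := Real.rpow_nonneg ENNReal.toReal_nonneg p
  have := hlc_antitone hp ht hts (s := s)
  simp only [hlPhi]
  nlinarith

lemma hlPhi_lower' {t : ℝ} (ht : 0 < t) (htT : t ≤ T) {x : X} (hx : x ∈ hlS d f y) :
    (hlQ d p f T y).toReal ≤ hlPhi d p f y t x :=
  (hlPhi_lower hp hfbot hT hQT hx).trans (hlPhi_mono_t hp hfbot hT hQT ht htT x)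

lemma hlPhi_bddBelow {t : ℝ} (ht : 0 < t) (htT : t ≤ T) :
    BddBelow (Set.range fun x : hlS d f y => hlPhi d p f y t x) := by
  refine ⟨(hlQ d p f T y).toReal, ?_⟩
  rintro r ⟨x, rfl⟩
  exact hlPhi_lower' hp hfbot hT hQT ht htT x.2

include hS

lemma hlQ_eq_qr {t : ℝ} (ht : 0 < t) (htT : t ≤ T) :
    hlQ d p f t y = ((hlqr d p f y t : ℝ) : EReal) := by
  have : Nonempty (hlS d f y) := hS.to_subtype
  rw [hlQ_eq_iInf_phi hp hfbot ht, hlqr]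
  exact (Monotone.map_ciInf_of_continuousAt (continuous_coe_real_ereal.continuousAt)
    (EReal.coe_strictMono.monotone) (hlPhi_bddBelow hp hfbot hT hQT ht htT)).symm

lemma hlqr_le_phi {t : ℝ} (ht : 0 < t) (htT : t ≤ T) {x : X} (hx : x ∈ hlS d f y) :
    hlqr d p f y t ≤ hlPhi d p f y t x := by
  have : Nonempty (hlS d f y) := hS.to_subtype
  exact ciInf_le (hlPhi_bddBelow hp hfbot hT hQT ht htT) ⟨x, hx⟩

lemma hlqr_lower {t : ℝ} (ht : 0 < t) (htT : t ≤ T) :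
    (hlQ d p f T y).toReal ≤ hlqr d p f y t := by
  have : Nonempty (hlS d f y) := hS.to_subtype
  exact le_ciInf fun x => hlPhi_lower' hp hfbot hT hQT ht htT x.2

lemma hlqr_antitone {t s : ℝ} (ht : 0 < t) (hts : t ≤ s) (hsT : s ≤ T) :
    hlqr d p f y s ≤ hlqr d p f y t := by
  have : Nonempty (hlS d f y) := hS.to_subtype
  exact ciInf_mono (hlPhi_bddBelow hp hfbot hT hQT (ht.trans_le hts) hsT)
    fun x => hlPhi_mono_t hp hfbot hT hQT ht hts x

lemma exists_near_min {t : ℝ} (ht : 0 < t) (htT : t ≤ T) {η : ℝ} (hη : 0 < η) :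
    ∃ x ∈ hlS d f y, hlPhi d p f y t x < hlqr d p f y t + η := by
  have : Nonempty (hlS d f y) := hS.to_subtype
  have : hlqr d p f y t < hlqr d p f y t + η := by linarith
  obtain ⟨x, hx⟩ := exists_lt_of_ciInf_lt (f := fun x : hlS d f y => hlPhi d p f y t x) this
  exact ⟨x.1, x.2, hx⟩

omit hS

lemma hlR_bound {t M : ℝ} (ht : 0 < t) (htT : t < T) {x : X} (hx : x ∈ hlS d f y)
    (hM : hlPhi d p f y t x ≤ M) :
    (d x y).toReal ^ p ≤ (M - (hlQ d p f T y).toReal) / (hlc p t - hlc p T) := by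
  have hlow := hlPhi_lower hp hfbot hT hQT hx
  have hc : 0 < hlc p t - hlc p T := sub_pos.2 (hlc_strict_anti hp ht htT)
  rw [le_div_iff₀ hc]
  simp only [hlPhi] at hM hlow
  nlinarith

end Window

section Window2
set_option linter.unusedSectionVars false

variable {X : Type*} {d : X → X → ENNReal} {p : ℝ} {f : X → EReal} {y : X} {T : ℝ}
variable (hp : 1 < p) (hfbot : ∀ x, f x ≠ ⊥) (hS : (hlS d f y).Nonempty)
variable (hT : 0 < T) (hQT : hlQ d p f T y ≠ ⊥)

include hp

lemma hlPhi_shift {t s : ℝ} (x : X) :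
    hlPhi d p f y t x = hlPhi d p f y s x
      + (d x y).toReal ^ p * (hlc p t - hlc p s) := by
  simp only [hlPhi]; ring

include hfbot hS hT hQT

/-- Core Lipschitz-type inequality for `hlqr`. -/
lemma hlqr_sub_le {a b t s : ℝ} (ha : 0 < a) (hat : a ≤ t) (hts : t ≤ s)
    (hsb : s ≤ b) (hbT : b < T) :
    hlqr d p f y t - hlqr d p f y s ≤
      max ((hlqr d p f y a + 1 - (hlQ d p f T y).toReal) / (hlc p b - hlc p T)) 0
        * (hlc p t - hlc p s) := by
  set m := (hlQ d p f T y).toReal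
  set D := max ((hlqr d p f y a + 1 - m) / (hlc p b - hlc p T)) 0 with hD
  have ht : 0 < t := ha.trans_le hat
  have hs : 0 < s := ht.trans_le hts
  have hsT : s < T := lt_of_le_of_lt hsb hbT
  have key : ∀ ε : ℝ, 0 < ε → ε ≤ 1 →
      hlqr d p f y t ≤ hlqr d p f y s + ε + D * (hlc p t - hlc p s) := by
    intro ε hε hε1
    obtain ⟨x, hx, hφ⟩ := exists_near_min hp hfbot hS hT hQT hs hsT.le hε
    have hRb : (d x y).toReal ^ p ≤ (hlqr d p f y s + ε - m) / (hlc p s - hlc p T) :=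
      hlR_bound hp hfbot hT hQT hs hsT hx hφ.le
    have hm_le : m ≤ hlqr d p f y s := hlqr_lower hp hfbot hS hT hQT hs hsT.le
    have hqa : hlqr d p f y s ≤ hlqr d p f y a :=
      hlqr_antitone hp hfbot hS hT hQT ha (hat.trans hts) hsT.le
    have hcb : 0 < hlc p b - hlc p T := sub_pos.2 (hlc_strict_anti hp (ha.trans_le (hat.trans (hts.trans hsb))) hbT)
    have hcs : hlc p b - hlc p T ≤ hlc p s - hlc p T := by
      have := hlc_antitone hp hs hsb
      linarith
    have hRD : (d x y).toReal ^ p ≤ D := by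
      refine hRb.trans (le_trans ?_ (le_max_left _ _))
      exact div_le_div₀ (by linarith) (by linarith) hcb hcs
    have hcts : 0 ≤ hlc p t - hlc p s := sub_nonneg.2 (hlc_antitone hp ht hts)
    have hφt : hlPhi d p f y t x ≤ hlPhi d p f y s x + D * (hlc p t - hlc p s) := by
      rw [hlPhi_shift hp x (s := s)]
      have := mul_le_mul_of_nonneg_right hRD hcts
      linarith
    have := hlqr_le_phi hp hfbot hS hT hQT ht (le_of_lt (lt_of_le_of_lt (hts.trans hsb) hbT)) hx
    linarith
  have h2 : ∀ ε : ℝ, 0 < ε →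
      hlqr d p f y t ≤ hlqr d p f y s + D * (hlc p t - hlc p s) + ε := by
    intro ε hε
    have := key (min ε 1) (lt_min hε one_pos) (min_le_right _ _)
    have : hlqr d p f y t ≤ hlqr d p f y s + min ε 1 + D * (hlc p t - hlc p s) := this
    have hmin : min ε 1 ≤ ε := min_le_left _ _
    linarith
  have := le_of_forall_pos_le_add h2
  linarith

omit hfbot hS hT hQT in
/-- Derivative of `hlc`. -/
lemma hlc_hasDerivAt {t : ℝ} (ht : 0 < t) :
    HasDerivAt (hlc p) (-((p - 1) / p) * t ^ (-p)) t := by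
  have h1 : HasDerivAt (fun u : ℝ => u ^ (p - 1)) ((p - 1) * t ^ (p - 1 - 1)) t :=
    Real.hasDerivAt_rpow_const (Or.inl ht.ne')
  have h2 : HasDerivAt (fun u : ℝ => p * u ^ (p - 1)) (p * ((p - 1) * t ^ (p - 1 - 1))) t :=
    h1.const_mul p
  have hne : p * t ^ (p - 1) ≠ 0 := (hlc_den_pos hp ht).ne'
  have h3 := h2.inv hne
  have heq : -(p * ((p - 1) * t ^ (p - 1 - 1))) / (p * t ^ (p - 1)) ^ 2
      = -((p - 1) / p) * t ^ (-p) := by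
    have e1 : t ^ (p - 1 - 1) = t ^ (p - 1) / t := by
      rw [Real.rpow_sub ht, Real.rpow_one]
    have e2 : t ^ p = t * t ^ (p - 1) := by
      have e := Real.rpow_add ht 1 (p - 1)
      have h1p : (1:ℝ) + (p - 1) = p := by ring
      rw [h1p, Real.rpow_one] at e
      exact e
    have e3 : t ^ (-p) = (t ^ p)⁻¹ := by rw [Real.rpow_neg ht.le]
    have hA : (0:ℝ) < t ^ (p - 1) := Real.rpow_pos_of_pos ht _
    rw [e1, e3, e2]
    have hp0 : p ≠ 0 := by linarith
    field_simp
  rw [heq] at h3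
  exact h3

end Window2

section CLemmas
variable {p : ℝ} (hp : 1 < p)
include hp

lemma hlc_sub_le {a t s : ℝ} (ha : 0 < a) (hat : a ≤ t) (hts : t ≤ s) :
    hlc p t - hlc p s ≤ (p - 1) / p * a ^ (-p) * (s - t) := by
  rcases eq_or_lt_of_le hts with rfl | hts'
  · simp
  · obtain ⟨ξ, hξ, hslope⟩ := exists_hasDerivAt_eq_slope (hlc p)
      (fun u => -((p - 1) / p) * u ^ (-p)) hts'
      (fun u hu => ((hlc_hasDerivAt hp (lt_of_lt_of_le ha (hat.trans hu.1))).continuousAt).continuousWithinAt)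
      (fun u hu => hlc_hasDerivAt hp (lt_of_lt_of_le ha (hat.trans hu.1.le)))
    have hξa : a ≤ ξ := hat.trans hξ.1.le
    have hξb : ξ ^ (-p) ≤ a ^ (-p) :=
      Real.rpow_le_rpow_of_nonpos ha hξa (by linarith)
    have hst : 0 < s - t := sub_pos.2 hts'
    have h0 := hslope.symm
    rw [div_eq_iff hst.ne'] at h0
    have hpp : 0 ≤ (p - 1) / p := div_nonneg (by linarith) (by linarith)
    have hmul := mul_le_mul_of_nonneg_right
      (mul_le_mul_of_nonneg_left hξb hpp) hst.le
    linarith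

lemma hlc_slope_tendsto {t : ℝ} (ht : 0 < t) :
    Tendsto (fun s => (hlc p s - hlc p t) / (s - t)) (nhdsWithin t {t}ᶜ)
      (nhds (-((p - 1) / p) * t ^ (-p))) := by
  have h := (hasDerivAt_iff_tendsto_slope).1 (hlc_hasDerivAt hp ht)
  have : slope (hlc p) t = fun s => (hlc p s - hlc p t) / (s - t) := by
    funext s; rw [slope_def_field]
  rwa [this] at h

end CLemmas

section Window3
set_option linter.unusedSectionVars false

variable {X : Type*} {d : X → X → ENNReal} {p : ℝ} {f : X → EReal} {y : X} {T : ℝ}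
variable (hp : 1 < p) (hfbot : ∀ x, f x ≠ ⊥) (hS : (hlS d f y).Nonempty)
variable (hT : 0 < T) (hQT : hlQ d p f T y ≠ ⊥)
include hp hfbot hS hT hQT

lemma hlQ_toReal_eq {t : ℝ} (ht : 0 < t) (htT : t ≤ T) :
    (hlQ d p f t y).toReal = hlqr d p f y t := by
  rw [hlQ_eq_qr hp hfbot hS hT hQT ht htT, EReal.toReal_coe]

lemma hl_lipschitzOnWith {a b : ℝ} (ha : 0 < a) (hab : a ≤ b) (hbT : b < T) :
    ∃ K : NNReal, LipschitzOnWith K (fun t => (hlQ d p f t y).toReal) (Set.Icc a b) := by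
  set m := (hlQ d p f T y).toReal
  set D := max ((hlqr d p f y a + 1 - m) / (hlc p b - hlc p T)) 0 with hDdef
  set L := (p - 1) / p * a ^ (-p) with hLdef
  have hD0 : 0 ≤ D := le_max_right _ _
  have hL0 : 0 ≤ L := mul_nonneg (div_nonneg (by linarith) (by linarith))
    (Real.rpow_nonneg ha.le _)
  refine ⟨Real.toNNReal (D * L), ?_⟩
  have key : ∀ t ∈ Set.Icc a b, ∀ s ∈ Set.Icc a b, t ≤ s →
      dist ((hlQ d p f t y).toReal) ((hlQ d p f s y).toReal) ≤ D * L * (s - t) := by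
    intro t htm s hsm hts
    have ht : 0 < t := ha.trans_le htm.1
    have hs : 0 < s := ha.trans_le hsm.1
    have htT : t ≤ T := htm.2.trans hbT.le
    have hsT : s ≤ T := hsm.2.trans hbT.le
    rw [hlQ_toReal_eq hp hfbot hS hT hQT ht htT, hlQ_toReal_eq hp hfbot hS hT hQT hs hsT]
    have h1 : hlqr d p f y s ≤ hlqr d p f y t :=
      hlqr_antitone hp hfbot hS hT hQT ht hts hsT
    have h2 : hlqr d p f y t - hlqr d p f y s ≤ D * (hlc p t - hlc p s) :=
      hlqr_sub_le hp hfbot hS hT hQT ha htm.1 hts hsm.2 hbT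
    have h3 : hlc p t - hlc p s ≤ L * (s - t) := hlc_sub_le hp ha htm.1 hts
    have h4 : 0 ≤ hlc p t - hlc p s := sub_nonneg.2 (hlc_antitone hp ht hts)
    rw [Real.dist_eq, abs_of_nonneg (by linarith)]
    calc hlqr d p f y t - hlqr d p f y s ≤ D * (hlc p t - hlc p s) := h2
      _ ≤ D * (L * (s - t)) := mul_le_mul_of_nonneg_left h3 hD0
      _ = D * L * (s - t) := by ring
  rw [lipschitzOnWith_iff_dist_le_mul]
  intro t htm s hsm
  rw [Real.coe_toNNReal _ (mul_nonneg hD0 hL0)]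
  rcases le_total t s with h | h
  · have h5 := key t htm s hsm h
    rw [Real.dist_eq, Real.dist_eq, abs_of_nonpos (by linarith : t - s ≤ 0)] at *
    linarith
  · have h5 := key s hsm t htm h
    rw [dist_comm] at h5
    rw [Real.dist_eq, Real.dist_eq, abs_of_nonneg (by linarith : (0:ℝ) ≤ t - s)] at *
    linarith

end Window3

section Window4
set_option linter.unusedSectionVars false

variable {X : Type*} {d : X → X → ENNReal} {p : ℝ} {f : X → EReal} {y : X} {T : ℝ}
variable (hp : 1 < p) (hfbot : ∀ x, f x ≠ ⊥) (hS : (hlS d f y).Nonempty)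
variable (hT : 0 < T) (hQT : hlQ d p f T y ≠ ⊥)
include hp hfbot hS hT hQT

lemma hl_min_of_phi_tendsto {t : ℝ} (ht : 0 < t) (htT : t ≤ T) {u : ℕ → X}
    (huS : ∀ n, u n ∈ hlS d f y)
    (hφ : Tendsto (fun n => hlPhi d p f y t (u n)) atTop (nhds (hlqr d p f y t))) :
    Tendsto (fun i => hlCost d p f t (u i) y) atTop (nhds (hlQ d p f t y)) := by
  rw [hlQ_eq_qr hp hfbot hS hT hQT ht htT]
  have := (EReal.tendsto_coe (m := fun n => hlPhi d p f y t (u n))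
    (a := hlqr d p f y t)).2 hφ
  exact this.congr fun n => (hlCost_eq_phi hp ht (huS n) (hfbot _)).symm

lemma hl_exists_min_seq {t : ℝ} (ht : 0 < t) (htT : t ≤ T) :
    ∃ u : ℕ → X, (∀ n, u n ∈ hlS d f y) ∧
      Tendsto (fun i => hlCost d p f t (u i) y) atTop (nhds (hlQ d p f t y)) := by
  have H : ∀ n : ℕ, ∃ x, x ∈ hlS d f y ∧
      hlPhi d p f y t x < hlqr d p f y t + 1 / ((n : ℝ) + 1) := fun n =>
    exists_near_min hp hfbot hS hT hQT ht htT (by positivity)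
  choose u huS hu using H
  have hlow : ∀ n : ℕ, hlqr d p f y t ≤ hlPhi d p f y t (u n) := fun n =>
    hlqr_le_phi hp hfbot hS hT hQT ht htT (huS n)
  have hup : Tendsto (fun n : ℕ => hlqr d p f y t + 1 / ((n : ℝ) + 1)) atTop
      (nhds (hlqr d p f y t + 0)) :=
    tendsto_const_nhds.add tendsto_one_div_add_atTop_nhds_zero_nat
  rw [add_zero] at hup
  have hφ : Tendsto (fun n => hlPhi d p f y t (u n)) atTop (nhds (hlqr d p f y t)) :=
    tendsto_of_tendsto_of_tendsto_of_le_of_le tendsto_const_nhds hup hlow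
      (fun n => (hu n).le)
  exact ⟨u, huS, hl_min_of_phi_tendsto hp hfbot hS hT hQT ht htT huS hφ⟩

lemma hl_minseq_eventually {t : ℝ} (ht : 0 < t) (htT : t ≤ T) {u : ℕ → X}
    (hu : Tendsto (fun i => hlCost d p f t (u i) y) atTop (nhds (hlQ d p f t y)))
    {η : ℝ} (hη : 0 < η) :
    ∀ᶠ i in atTop, u i ∈ hlS d f y ∧
      hlPhi d p f y t (u i) < hlqr d p f y t + η := by
  rw [hlQ_eq_qr hp hfbot hS hT hQT ht htT] at hu
  have hlt : ((hlqr d p f y t : ℝ) : EReal) < ((hlqr d p f y t + η : ℝ) : EReal) := by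
    rw [EReal.coe_lt_coe_iff]; linarith
  filter_upwards [hu.eventually_lt_const hlt] with i hi
  have hiS : u i ∈ hlS d f y := by
    by_contra hiS
    rw [hlCost_eq_top hp ht hiS (hfbot _)] at hi
    exact absurd hi (by simp)
  refine ⟨hiS, ?_⟩
  rw [hlCost_eq_phi hp ht hiS (hfbot _), EReal.coe_lt_coe_iff] at hi
  exact hi

lemma hl_d_bound_of_phi {t : ℝ} (ht : 0 < t) (htT : t < T) {x : X}
    (hx : x ∈ hlS d f y) (hφ : hlPhi d p f y t x ≤ hlqr d p f y t + 1) :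
    d x y ≤ ENNReal.ofReal
      (((hlqr d p f y t + 1 - (hlQ d p f T y).toReal) / (hlc p t - hlc p T)) ^ (1/p)) := by
  have hRb := hlR_bound hp hfbot hT hQT ht htT hx hφ
  have hDr : (0:ℝ) ≤ (d x y).toReal := ENNReal.toReal_nonneg
  have hp0 : p ≠ 0 := by linarith
  have h1 : ((d x y).toReal ^ p) ^ (1/p) ≤
      ((hlqr d p f y t + 1 - (hlQ d p f T y).toReal) / (hlc p t - hlc p T)) ^ (1/p) :=
    Real.rpow_le_rpow (Real.rpow_nonneg hDr p) hRb (by positivity)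
  have h2 : ((d x y).toReal ^ p) ^ (1/p) = (d x y).toReal := by
    rw [← Real.rpow_mul hDr, mul_one_div_cancel hp0, Real.rpow_one]
  rw [h2] at h1
  calc d x y = ENNReal.ofReal ((d x y).toReal) := (ENNReal.ofReal_toReal hx.2).symm
    _ ≤ _ := ENNReal.ofReal_le_ofReal h1

lemma hlDPlus_le {t : ℝ} (ht : 0 < t) (htT : t < T) :
    hlDPlus d p f y t ≤ ENNReal.ofReal
      (((hlqr d p f y t + 1 - (hlQ d p f T y).toReal) / (hlc p t - hlc p T)) ^ (1/p)) := by
  refine iSup_le fun u => ?_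
  refine limsup_le_of_le (by isBoundedDefault) ?_
  filter_upwards [hl_minseq_eventually hp hfbot hS hT hQT ht htT.le u.2 one_pos] with i hi
  exact hl_d_bound_of_phi hp hfbot hS hT hQT ht htT hi.1 hi.2.le

lemma hlDPlus_ne_top {t : ℝ} (ht : 0 < t) (htT : t < T) : hlDPlus d p f y t ≠ ⊤ :=
  ne_top_of_le_ne_top ENNReal.ofReal_ne_top (hlDPlus_le hp hfbot hS hT hQT ht htT)

lemma hlDMinus_le_hlDPlus {t : ℝ} (ht : 0 < t) (htT : t < T) :
    hlDMinus d p f y t ≤ hlDPlus d p f y t := by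
  obtain ⟨u, huS, hu⟩ := hl_exists_min_seq hp hfbot hS hT hQT ht htT.le
  calc hlDMinus d p f y t ≤ liminf (fun i => d (u i) y) atTop :=
        iInf_le (fun v : {u : ℕ → X // Tendsto (fun i => hlCost d p f t (u i) y) atTop
          (nhds (hlQ d p f t y))} => liminf (fun i => d (v.1 i) y) atTop) ⟨u, hu⟩
    _ ≤ limsup (fun i => d (u i) y) atTop := liminf_le_limsup
    _ ≤ hlDPlus d p f y t := le_iSup (fun v : {u : ℕ → X // Tendsto
          (fun i => hlCost d p f t (u i) y) atTop (nhds (hlQ d p f t y))} =>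
          limsup (fun i => d (v.1 i) y) atTop) ⟨u, hu⟩

lemma hlDMinus_ne_top {t : ℝ} (ht : 0 < t) (htT : t < T) : hlDMinus d p f y t ≠ ⊤ :=
  ne_top_of_le_ne_top (hlDPlus_ne_top hp hfbot hS hT hQT ht htT)
    (hlDMinus_le_hlDPlus hp hfbot hS hT hQT ht htT)

end Window4

section Window5
set_option linter.unusedSectionVars false

variable {X : Type*} {d : X → X → ENNReal} {p : ℝ} {f : X → EReal} {y : X} {T : ℝ}
variable (hp : 1 < p) (hfbot : ∀ x, f x ≠ ⊥) (hS : (hlS d f y).Nonempty)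
variable (hT : 0 < T) (hQT : hlQ d p f T y ≠ ⊥)
include hp hfbot hS hT hQT

/-- Selector: near-minimizers with `d` close to `𝔡⁺` from below. -/
lemma hl_select_plus {t : ℝ} (ht : 0 < t) (htT : t < T) {ε η : ℝ} (hε : 0 < ε)
    (hη : 0 < η) :
    ∃ x ∈ hlS d f y, hlPhi d p f y t x ≤ hlqr d p f y t + η ∧
      max ((hlDPlus d p f y t).toReal - ε) 0 ≤ (d x y).toReal := by
  set δ := (hlDPlus d p f y t).toReal with hδ
  rcases le_or_gt (δ - ε) 0 with h0 | h0
  · obtain ⟨x, hx, hφ⟩ := exists_near_min hp hfbot hS hT hQT ht htT.le hη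
    exact ⟨x, hx, hφ.le, by rw [max_eq_right h0]; exact ENNReal.toReal_nonneg⟩
  · have htop := hlDPlus_ne_top hp hfbot hS hT hQT ht htT
    have hlt : ENNReal.ofReal (δ - ε) < hlDPlus d p f y t := by
      rw [ENNReal.ofReal_lt_iff_lt_toReal h0.le htop]
      linarith
    rw [hlDPlus, lt_iSup_iff] at hlt
    obtain ⟨u, hu⟩ := hlt
    have hfr : ∃ᶠ i in atTop, ENNReal.ofReal (δ - ε) < d (u.1 i) y :=
      frequently_lt_of_lt_limsup (by isBoundedDefault) hu
    have hev := hl_minseq_eventually hp hfbot hS hT hQT ht htT.le u.2 hη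
    obtain ⟨i, hi1, hi2⟩ := (hfr.and_eventually hev).exists
    refine ⟨u.1 i, hi2.1, hi2.2.le, ?_⟩
    rw [max_eq_left h0.le]
    exact (ENNReal.ofReal_le_iff_le_toReal hi2.1.2).1 hi1.le

/-- Selector: near-minimizers with `d` close to `𝔡⁻` from above. -/
lemma hl_select_minus {t : ℝ} (ht : 0 < t) (htT : t < T) {ε η : ℝ} (hε : 0 < ε)
    (hη : 0 < η) :
    ∃ x ∈ hlS d f y, hlPhi d p f y t x ≤ hlqr d p f y t + η ∧
      (d x y).toReal ≤ (hlDMinus d p f y t).toReal + ε := by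
  set δ := (hlDMinus d p f y t).toReal with hδ
  have htop := hlDMinus_ne_top hp hfbot hS hT hQT ht htT
  have hlt : hlDMinus d p f y t < ENNReal.ofReal (δ + ε) := by
    rw [ENNReal.lt_ofReal_iff_toReal_lt htop]
    linarith
  rw [hlDMinus, iInf_lt_iff] at hlt
  obtain ⟨u, hu⟩ := hlt
  have hfr : ∃ᶠ i in atTop, d (u.1 i) y < ENNReal.ofReal (δ + ε) :=
    frequently_lt_of_liminf_lt (by isBoundedDefault) hu
  have hev := hl_minseq_eventually hp hfbot hS hT hQT ht htT.le u.2 hη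
  obtain ⟨i, hi1, hi2⟩ := (hfr.and_eventually hev).exists
  refine ⟨u.1 i, hi2.1, hi2.2.le, ?_⟩
  have := ENNReal.toReal_mono ENNReal.ofReal_ne_top hi1.le
  rwa [ENNReal.toReal_ofReal (by positivity)] at this

/-- Near-minimizers at parameters `s n → t` form a minimizing sequence at `t`. -/
lemma hl_transfer_minseq {a b t : ℝ} (ha : 0 < a) (hat : a ≤ t) (htb : t ≤ b)
    (hbT : b < T) {s : ℕ → ℝ} {x : ℕ → X} {e : ℕ → ℝ}
    (hs : Tendsto s atTop (nhds t)) (hsab : ∀ n, s n ∈ Set.Icc a b)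
    (hxS : ∀ n, x n ∈ hlS d f y)
    (he : ∀ n, hlPhi d p f y (s n) (x n) ≤ hlqr d p f y (s n) + e n)
    (he0 : ∀ n, 0 ≤ e n) (helim : Tendsto e atTop (nhds 0)) :
    Tendsto (fun i => hlCost d p f t (x i) y) atTop (nhds (hlQ d p f t y)) := by
  have ht : 0 < t := ha.trans_le hat
  have htT : t ≤ T := htb.trans hbT.le
  set m := (hlQ d p f T y).toReal
  set D := max ((hlqr d p f y a + 1 - m) / (hlc p b - hlc p T)) 0 with hDdef
  have hD0 : 0 ≤ D := le_max_right _ _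
  -- eventual bound on R n
  have hRn : ∀ᶠ n in atTop, (d (x n) y).toReal ^ p ≤ D := by
    filter_upwards [helim.eventually_le_const (show (0:ℝ) < 1 by norm_num)] with n hn
    have hsn : 0 < s n := ha.trans_le (hsab n).1
    have hsnT : s n < T := lt_of_le_of_lt (hsab n).2 hbT
    have hRb := hlR_bound hp hfbot hT hQT hsn hsnT (hxS n)
      (show hlPhi d p f y (s n) (x n) ≤ hlqr d p f y (s n) + 1 by linarith [he n])
    have hqa : hlqr d p f y (s n) ≤ hlqr d p f y a :=
      hlqr_antitone hp hfbot hS hT hQT ha (hsab n).1 hsnT.le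
    have hm_le : m ≤ hlqr d p f y (s n) := hlqr_lower hp hfbot hS hT hQT hsn hsnT.le
    have hcb : 0 < hlc p b - hlc p T := sub_pos.2 (hlc_strict_anti hp (ha.trans_le (hat.trans htb)) hbT)
    have hcs : hlc p b - hlc p T ≤ hlc p (s n) - hlc p T := by
      have := hlc_antitone hp hsn (hsab n).2
      linarith
    refine hRb.trans (le_trans ?_ (le_max_left _ _))
    exact div_le_div₀ (by linarith) (by linarith) hcb hcs
  -- continuity of qr along s n
  have hqlim : Tendsto (fun n => hlqr d p f y (s n)) atTop (nhds (hlqr d p f y t)) := by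
    obtain ⟨K, hK⟩ := hl_lipschitzOnWith hp hfbot hS hT hQT ha (hat.trans htb) hbT
    have hcont := hK.continuousOn t (Set.mem_Icc.2 ⟨hat, htb⟩)
    have hsin : Tendsto s atTop (nhdsWithin t (Set.Icc a b)) := by
      rw [tendsto_nhdsWithin_iff]
      exact ⟨hs, Eventually.of_forall hsab⟩
    have := hcont.tendsto.comp hsin
    have heq : ∀ n, (hlQ d p f (s n) y).toReal = hlqr d p f y (s n) := fun n =>
      hlQ_toReal_eq hp hfbot hS hT hQT (ha.trans_le (hsab n).1)
        (le_of_lt (lt_of_le_of_lt (hsab n).2 hbT))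
    rw [hlQ_toReal_eq hp hfbot hS hT hQT ht htT] at this
    exact this.congr heq
  -- c continuity
  have hclim : Tendsto (fun n => hlc p (s n)) atTop (nhds (hlc p t)) :=
    ((hlc_hasDerivAt hp ht).continuousAt.tendsto).comp hs
  have habs : Tendsto (fun n => |hlc p t - hlc p (s n)|) atTop (nhds 0) := by
    have := (tendsto_const_nhds (x := hlc p t) (f := atTop (α := ℕ))).sub hclim
    rw [sub_self] at this
    have := this.abs
    rwa [abs_zero] at this
  -- squeeze
  have hup : Tendsto (fun n => hlqr d p f y (s n) + e n + D * |hlc p t - hlc p (s n)|)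
      atTop (nhds (hlqr d p f y t)) := by
    have : Tendsto (fun n => hlqr d p f y (s n) + e n + D * |hlc p t - hlc p (s n)|)
        atTop (nhds (hlqr d p f y t + 0 + D * 0)) :=
      (hqlim.add helim).add (habs.const_mul D)
    simpa using this
  have hφ : Tendsto (fun n => hlPhi d p f y t (x n)) atTop (nhds (hlqr d p f y t)) := by
    refine tendsto_of_tendsto_of_tendsto_of_le_of_le' tendsto_const_nhds hup ?_ ?_
    · exact Eventually.of_forall fun n =>
        hlqr_le_phi hp hfbot hS hT hQT ht htT (hxS n)
    · filter_upwards [hRn] with n hn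
      have hR0 : (0:ℝ) ≤ (d (x n) y).toReal ^ p := Real.rpow_nonneg ENNReal.toReal_nonneg p
      have key : hlPhi d p f y t (x n) = hlPhi d p f y (s n) (x n)
          + (d (x n) y).toReal ^ p * (hlc p t - hlc p (s n)) := hlPhi_shift hp (x n)
      have h1 : (d (x n) y).toReal ^ p * (hlc p t - hlc p (s n)) ≤ D * |hlc p t - hlc p (s n)| := by
        calc (d (x n) y).toReal ^ p * (hlc p t - hlc p (s n))
            ≤ (d (x n) y).toReal ^ p * |hlc p t - hlc p (s n)| :=
              mul_le_mul_of_nonneg_left (le_abs_self _) hR0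
          _ ≤ D * |hlc p t - hlc p (s n)| :=
              mul_le_mul_of_nonneg_right hn (abs_nonneg _)
      linarith [he n]
  exact hl_min_of_phi_tendsto hp hfbot hS hT hQT ht htT hxS hφ

end Window5

section Window6
set_option linter.unusedSectionVars false

variable {X : Type*} {d : X → X → ENNReal} {p : ℝ} {f : X → EReal} {y : X} {T : ℝ}
variable (hp : 1 < p) (hfbot : ∀ x, f x ≠ ⊥) (hS : (hlS d f y).Nonempty)
variable (hT : 0 < T) (hQT : hlQ d p f T y ≠ ⊥)
include hp hfbot hS hT hQT

lemma hl_tendsto_right {t : ℝ} (ht : 0 < t) (htT : t < T) :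
    Tendsto (fun s => (hlqr d p f y s - hlqr d p f y t) / (s - t))
      (nhdsWithin t (Set.Ioi t))
      (nhds ((hlDPlus d p f y t).toReal ^ p * (-((p - 1) / p) * t ^ (-p)))) := by
  set δ := (hlDPlus d p f y t).toReal with hδdef
  have hδ0 : 0 ≤ δ := ENNReal.toReal_nonneg
  set cd := -((p - 1) / p) * t ^ (-p) with hcddef
  set b' := (t + T) / 2 with hb'def
  have htb' : t < b' := by rw [hb'def]; linarith
  have hb'T : b' < T := by rw [hb'def]; linarith
  set quot := fun s => (hlqr d p f y s - hlqr d p f y t) / (s - t) with hquot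
  set slopec := fun s => (hlc p s - hlc p t) / (s - t) with hslopec
  rw [tendsto_iff_seq_tendsto]
  intro s0 hs0
  have hmem : ∀ᶠ n in atTop, s0 n ∈ Set.Ioo t b' :=
    hs0.eventually (Ioo_mem_nhdsGT_of_mem ⟨le_refl t, htb'⟩)
  set s : ℕ → ℝ := fun n => if s0 n ∈ Set.Ioo t b' then s0 n else (t + b') / 2 with hsdef
  have hseq : ∀ n, s n ∈ Set.Ioo t b' := by
    intro n
    by_cases h : s0 n ∈ Set.Ioo t b'
    · simp only [hsdef]; rw [if_pos h]; exact h
    · simp only [hsdef, if_neg h]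
      exact ⟨by linarith, by linarith⟩
  have heqf : s =ᶠ[atTop] s0 := hmem.mono fun n hn => by simp only [hsdef]; rw [if_pos hn]
  have hst : Tendsto s atTop (nhds t) :=
    ((hs0.mono_right nhdsWithin_le_nhds).congr' heqf.symm)
  suffices h : Tendsto (fun n => quot (s n)) atTop (nhds (δ ^ p * cd)) by
    refine (h.congr' (heqf.mono fun n hn => by rw [Function.comp_apply, ← hn]))
  have hsn_pos : ∀ n, 0 < s n := fun n => ht.trans (hseq n).1
  have hsnt : ∀ n, 0 < s n - t := fun n => sub_pos.2 (hseq n).1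
  have hsnT : ∀ n, s n < T := fun n => (hseq n).2.trans hb'T
  set e : ℕ → ℝ := fun n => (s n - t) * (s n - t) with hedef
  have hee : ∀ n, e n = (s n - t) * (s n - t) := fun n => rfl
  have he_pos : ∀ n, 0 < e n := fun n => mul_pos (hsnt n) (hsnt n)
  have hstt : Tendsto (fun n => s n - t) atTop (nhds 0) := by
    have := hst.sub_const t; rwa [sub_self] at this
  have helim : Tendsto e atTop (nhds 0) := by
    have := hstt.mul hstt; rwa [mul_zero] at this
  have hslim : Tendsto (fun n => slopec (s n)) atTop (nhds cd) := by
    refine ((hlc_slope_tendsto hp ht).comp ?_)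
    rw [tendsto_nhdsWithin_iff]
    refine ⟨hst, Eventually.of_forall fun n => ?_⟩
    rw [Set.mem_compl_singleton_iff]
    exact (hseq n).1.ne'
  have hcs_np : ∀ n, hlc p (s n) - hlc p t ≤ 0 :=
    fun n => sub_nonpos.2 (hlc_antitone hp ht (hseq n).1.le)
  -- near-minimizers at s n
  have hxn : ∀ n, ∃ z, z ∈ hlS d f y ∧
      hlPhi d p f y (s n) z < hlqr d p f y (s n) + e n :=
    fun n => exists_near_min hp hfbot hS hT hQT (hsn_pos n) (hsnT n).le (he_pos n)
  choose x hxS hxφ using hxn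
  have hxmin : Tendsto (fun i => hlCost d p f t (x i) y) atTop (nhds (hlQ d p f t y)) :=
    hl_transfer_minseq hp hfbot hS hT hQT ht le_rfl htb'.le hb'T hst
      (fun n => ⟨(hseq n).1.le, (hseq n).2.le⟩) hxS (fun n => (hxφ n).le)
      (fun n => (he_pos n).le) helim
  have hlimsup_d : limsup (fun i => d (x i) y) atTop ≤ hlDPlus d p f y t :=
    le_iSup (fun v : {u : ℕ → X // Tendsto (fun i => hlCost d p f t (u i) y) atTop
      (nhds (hlQ d p f t y))} => limsup (fun i => d (v.1 i) y) atTop) ⟨x, hxmin⟩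
  have hDtop := hlDPlus_ne_top hp hfbot hS hT hQT ht htT
  -- lower eventual bounds
  have hlo : ∀ ε : ℝ, 0 < ε → ∀ᶠ n in atTop,
      -(s n - t) + (δ + ε) ^ p * slopec (s n) ≤ quot (s n) := by
    intro ε hε
    have h1 : hlDPlus d p f y t < ENNReal.ofReal (δ + ε) := by
      rw [ENNReal.lt_ofReal_iff_toReal_lt hDtop, ← hδdef]; linarith
    have h2 : ∀ᶠ n in atTop, d (x n) y < ENNReal.ofReal (δ + ε) :=
      eventually_lt_of_limsup_lt (lt_of_le_of_lt hlimsup_d h1)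
    filter_upwards [h2] with n hn
    have hR : (d (x n) y).toReal ^ p ≤ (δ + ε) ^ p := by
      have h3 : (d (x n) y).toReal ≤ δ + ε := by
        have := ENNReal.toReal_mono ENNReal.ofReal_ne_top hn.le
        rwa [ENNReal.toReal_ofReal (by linarith)] at this
      exact Real.rpow_le_rpow ENNReal.toReal_nonneg h3 (by linarith)
    have hq1 : hlqr d p f y t ≤ hlPhi d p f y t (x n) :=
      hlqr_le_phi hp hfbot hS hT hQT ht htT.le (hxS n)
    have hq2 : hlPhi d p f y t (x n) = hlPhi d p f y (s n) (x n)
        + (d (x n) y).toReal ^ p * (hlc p t - hlc p (s n)) := hlPhi_shift hp (x n)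
    have hkey : -(e n) + (d (x n) y).toReal ^ p * (hlc p (s n) - hlc p t) ≤
        hlqr d p f y (s n) - hlqr d p f y t := by
      have h4 := (hxφ n).le
      nlinarith [hq1, hq2, h4]
    have hRs : (δ + ε) ^ p * (hlc p (s n) - hlc p t) ≤
        (d (x n) y).toReal ^ p * (hlc p (s n) - hlc p t) :=
      mul_le_mul_of_nonpos_right hR (hcs_np n)
    rw [hquot]
    rw [le_div_iff₀ (hsnt n)]
    have hne : s n - t ≠ 0 := (hsnt n).ne'
    have hexp : (-(s n - t) + (δ + ε) ^ p * slopec (s n)) * (s n - t)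
        = -((s n - t) * (s n - t)) + (δ + ε) ^ p * (hlc p (s n) - hlc p t) := by
      rw [hslopec]
      field_simp
      try ring
    rw [hexp, ← hee n]
    linarith
  -- upper eventual bounds
  have hup : ∀ ε : ℝ, 0 < ε → ∀ᶠ n in atTop,
      quot (s n) ≤ (s n - t) + max (δ - ε) 0 ^ p * slopec (s n) := by
    intro ε hε
    have hsel : ∀ n, ∃ z ∈ hlS d f y, hlPhi d p f y t z ≤ hlqr d p f y t + e n ∧
        max (δ - ε) 0 ≤ (d z y).toReal := fun n =>
      hl_select_plus hp hfbot hS hT hQT ht htT hε (he_pos n)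
    choose z hzS hzφ hzd using hsel
    refine Eventually.of_forall fun n => ?_
    have hρ0 : (0:ℝ) ≤ max (δ - ε) 0 := le_max_right _ _
    have hRz : max (δ - ε) 0 ^ p ≤ (d (z n) y).toReal ^ p :=
      Real.rpow_le_rpow hρ0 (hzd n) (by linarith)
    have hq1 : hlqr d p f y (s n) ≤ hlPhi d p f y (s n) (z n) :=
      hlqr_le_phi hp hfbot hS hT hQT (hsn_pos n) (hsnT n).le (hzS n)
    have hq2 : hlPhi d p f y (s n) (z n) = hlPhi d p f y t (z n)
        + (d (z n) y).toReal ^ p * (hlc p (s n) - hlc p t) := hlPhi_shift hp (z n)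
    have hRs : (d (z n) y).toReal ^ p * (hlc p (s n) - hlc p t) ≤
        max (δ - ε) 0 ^ p * (hlc p (s n) - hlc p t) :=
      mul_le_mul_of_nonpos_right hRz (hcs_np n)
    have hkey : hlqr d p f y (s n) - hlqr d p f y t ≤
        e n + max (δ - ε) 0 ^ p * (hlc p (s n) - hlc p t) := by
      have h4 := hzφ n
      linarith
    rw [hquot]
    rw [div_le_iff₀ (hsnt n)]
    have hne : s n - t ≠ 0 := (hsnt n).ne'
    have hexp : ((s n - t) + max (δ - ε) 0 ^ p * slopec (s n)) * (s n - t)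
        = (s n - t) * (s n - t) + max (δ - ε) 0 ^ p * (hlc p (s n) - hlc p t) := by
      rw [hslopec]
      field_simp
      try ring
    rw [hexp, ← hee n]
    linarith
  -- limits of bound sequences
  have hupB : ∀ ρ : ℝ, Tendsto (fun n => (s n - t) + ρ * slopec (s n)) atTop
      (nhds (ρ * cd)) := by
    intro ρ
    have := hstt.add (hslim.const_mul ρ)
    rwa [zero_add] at this
  have hloB : ∀ ρ : ℝ, Tendsto (fun n => -(s n - t) + ρ * slopec (s n)) atTop
      (nhds (ρ * cd)) := by
    intro ρ
    have := hstt.neg.add (hslim.const_mul ρ)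
    rwa [neg_zero, zero_add] at this
  have hbdd_le : IsBoundedUnder (· ≤ ·) atTop (fun n => quot (s n)) :=
    ((hupB (max (δ - 1) 0 ^ p)).isBoundedUnder_le).mono_le (hup 1 one_pos)
  have hbdd_ge : IsBoundedUnder (· ≥ ·) atTop (fun n => quot (s n)) :=
    ((hloB ((δ + 1) ^ p)).isBoundedUnder_ge).mono_ge (hlo 1 one_pos)
  have hlimsup_le : limsup (fun n => quot (s n)) atTop ≤ δ ^ p * cd := by
    have hstep : ∀ ε : ℝ, 0 < ε →
        limsup (fun n => quot (s n)) atTop ≤ max (δ - ε) 0 ^ p * cd := by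
      intro ε hε
      have h1 := limsup_le_limsup (hup ε hε) (hbdd_ge.isCoboundedUnder_le)
        ((hupB (max (δ - ε) 0 ^ p)).isBoundedUnder_le)
      rwa [(hupB (max (δ - ε) 0 ^ p)).limsup_eq] at h1
    have hcont : Tendsto (fun k : ℕ => max (δ - 1 / ((k:ℝ) + 1)) 0 ^ p * cd) atTop
        (nhds (δ ^ p * cd)) := by
      have h1 : Tendsto (fun k : ℕ => δ - 1 / ((k:ℝ) + 1)) atTop (nhds δ) := by
        have := (tendsto_const_nhds (x := δ) (f := (atTop : Filter ℕ))).sub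
          tendsto_one_div_add_atTop_nhds_zero_nat
        rwa [sub_zero] at this
      have h2 : Tendsto (fun k : ℕ => max (δ - 1 / ((k:ℝ) + 1)) 0) atTop
          (nhds (max δ 0)) := h1.max tendsto_const_nhds
      rw [max_eq_left hδ0] at h2
      exact (h2.rpow_const (Or.inr (by linarith))).mul_const cd
    exact ge_of_tendsto' hcont fun k => hstep (1 / ((k:ℝ) + 1)) (by positivity)
  have hliminf_ge : δ ^ p * cd ≤ liminf (fun n => quot (s n)) atTop := by
    have hstep : ∀ ε : ℝ, 0 < ε →
        (δ + ε) ^ p * cd ≤ liminf (fun n => quot (s n)) atTop := by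
      intro ε hε
      have h1 := liminf_le_liminf (hlo ε hε)
        ((hloB ((δ + ε) ^ p)).isBoundedUnder_ge) (hbdd_le.isCoboundedUnder_ge)
      rwa [(hloB ((δ + ε) ^ p)).liminf_eq] at h1
    have hcont : Tendsto (fun k : ℕ => (δ + 1 / ((k:ℝ) + 1)) ^ p * cd) atTop
        (nhds (δ ^ p * cd)) := by
      have h1 : Tendsto (fun k : ℕ => δ + 1 / ((k:ℝ) + 1)) atTop (nhds δ) := by
        have := (tendsto_const_nhds (x := δ) (f := (atTop : Filter ℕ))).add
          tendsto_one_div_add_atTop_nhds_zero_nat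
        rwa [add_zero] at this
      exact (h1.rpow_const (Or.inr (by linarith))).mul_const cd
    exact le_of_tendsto' hcont fun k => hstep (1 / ((k:ℝ) + 1)) (by positivity)
  exact tendsto_of_le_liminf_of_limsup_le hliminf_ge hlimsup_le hbdd_le hbdd_ge

end Window6

section Window7
set_option linter.unusedSectionVars false

variable {X : Type*} {d : X → X → ENNReal} {p : ℝ} {f : X → EReal} {y : X} {T : ℝ}
variable (hp : 1 < p) (hfbot : ∀ x, f x ≠ ⊥) (hS : (hlS d f y).Nonempty)
variable (hT : 0 < T) (hQT : hlQ d p f T y ≠ ⊥)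
include hp hfbot hS hT hQT

lemma hl_tendsto_left {t : ℝ} (ht : 0 < t) (htT : t < T) :
    Tendsto (fun s => (hlqr d p f y s - hlqr d p f y t) / (s - t))
      (nhdsWithin t (Set.Iio t))
      (nhds ((hlDMinus d p f y t).toReal ^ p * (-((p - 1) / p) * t ^ (-p)))) := by
  set δ := (hlDMinus d p f y t).toReal with hδdef
  have hδ0 : 0 ≤ δ := ENNReal.toReal_nonneg
  set cd := -((p - 1) / p) * t ^ (-p) with hcddef
  set a' := t / 2 with ha'def
  have ha'0 : 0 < a' := by rw [ha'def]; linarith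
  have ha't : a' < t := by rw [ha'def]; linarith
  set quot := fun s => (hlqr d p f y s - hlqr d p f y t) / (s - t) with hquot
  set slopec := fun s => (hlc p s - hlc p t) / (s - t) with hslopec
  rw [tendsto_iff_seq_tendsto]
  intro s0 hs0
  have hmem : ∀ᶠ n in atTop, s0 n ∈ Set.Ioo a' t :=
    hs0.eventually (Ioo_mem_nhdsLT_of_mem ⟨ha't, le_refl t⟩)
  set s : ℕ → ℝ := fun n => if s0 n ∈ Set.Ioo a' t then s0 n else (a' + t) / 2 with hsdef
  have hseq : ∀ n, s n ∈ Set.Ioo a' t := by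
    intro n
    by_cases h : s0 n ∈ Set.Ioo a' t
    · simp only [hsdef]; rw [if_pos h]; exact h
    · simp only [hsdef, if_neg h]
      exact ⟨by linarith, by linarith⟩
  have heqf : s =ᶠ[atTop] s0 := hmem.mono fun n hn => by simp only [hsdef]; rw [if_pos hn]
  have hst : Tendsto s atTop (nhds t) :=
    ((hs0.mono_right nhdsWithin_le_nhds).congr' heqf.symm)
  suffices h : Tendsto (fun n => quot (s n)) atTop (nhds (δ ^ p * cd)) by
    refine (h.congr' (heqf.mono fun n hn => by rw [Function.comp_apply, ← hn]))
  have hsn_pos : ∀ n, 0 < s n := fun n => ha'0.trans (hseq n).1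
  have hsnt : ∀ n, s n - t < 0 := fun n => sub_neg.2 (hseq n).2
  have hsnT : ∀ n, s n < T := fun n => (hseq n).2.trans htT
  set e : ℕ → ℝ := fun n => (s n - t) * (s n - t) with hedef
  have hee : ∀ n, e n = (s n - t) * (s n - t) := fun n => rfl
  have he_pos : ∀ n, 0 < e n := fun n => mul_pos_of_neg_of_neg (hsnt n) (hsnt n)
  have hstt : Tendsto (fun n => s n - t) atTop (nhds 0) := by
    have := hst.sub_const t; rwa [sub_self] at this
  have hstt' : Tendsto (fun n => t - s n) atTop (nhds 0) := by
    have h := hstt.neg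
    rw [neg_zero] at h
    exact h.congr fun n => by ring
  have helim : Tendsto e atTop (nhds 0) := by
    have := hstt.mul hstt; rwa [mul_zero] at this
  have hslim : Tendsto (fun n => slopec (s n)) atTop (nhds cd) := by
    refine ((hlc_slope_tendsto hp ht).comp ?_)
    rw [tendsto_nhdsWithin_iff]
    refine ⟨hst, Eventually.of_forall fun n => ?_⟩
    rw [Set.mem_compl_singleton_iff]
    exact (hseq n).2.ne
  have hcs_nn : ∀ n, 0 ≤ hlc p (s n) - hlc p t :=
    fun n => sub_nonneg.2 (hlc_antitone hp (hsn_pos n) (hseq n).2.le)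
  -- near-minimizers at s n
  have hxn : ∀ n, ∃ z, z ∈ hlS d f y ∧
      hlPhi d p f y (s n) z < hlqr d p f y (s n) + e n :=
    fun n => exists_near_min hp hfbot hS hT hQT (hsn_pos n) (hsnT n).le (he_pos n)
  choose x hxS hxφ using hxn
  have hxmin : Tendsto (fun i => hlCost d p f t (x i) y) atTop (nhds (hlQ d p f t y)) :=
    hl_transfer_minseq hp hfbot hS hT hQT ha'0 ha't.le le_rfl htT hst
      (fun n => ⟨(hseq n).1.le, (hseq n).2.le⟩) hxS (fun n => (hxφ n).le)
      (fun n => (he_pos n).le) helim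
  have hliminf_d : hlDMinus d p f y t ≤ liminf (fun i => d (x i) y) atTop :=
    iInf_le (fun v : {u : ℕ → X // Tendsto (fun i => hlCost d p f t (u i) y) atTop
      (nhds (hlQ d p f t y))} => liminf (fun i => d (v.1 i) y) atTop) ⟨x, hxmin⟩
  have htop := hlDMinus_ne_top hp hfbot hS hT hQT ht htT
  -- upper eventual bounds (using the transferred minimizing sequence)
  have hup : ∀ ε : ℝ, 0 < ε → ∀ᶠ n in atTop,
      quot (s n) ≤ (t - s n) + max (δ - ε) 0 ^ p * slopec (s n) := by
    intro ε hε
    have hRε : ∀ᶠ n in atTop, max (δ - ε) 0 ^ p ≤ (d (x n) y).toReal ^ p := by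
      rcases le_or_gt (δ - ε) 0 with h0 | h0
      · refine Eventually.of_forall fun n => ?_
        rw [max_eq_right h0, Real.zero_rpow (by positivity : (0:ℝ) < p).ne']
        exact Real.rpow_nonneg ENNReal.toReal_nonneg p
      · have h1 : ENNReal.ofReal (max (δ - ε) 0) < hlDMinus d p f y t := by
          rw [max_eq_left h0.le, ENNReal.ofReal_lt_iff_lt_toReal h0.le htop, ← hδdef]
          linarith
        have h2 : ∀ᶠ n in atTop, ENNReal.ofReal (max (δ - ε) 0) < d (x n) y :=
          eventually_lt_of_lt_liminf (lt_of_lt_of_le h1 hliminf_d)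
        filter_upwards [h2] with n hn
        have h3 : max (δ - ε) 0 ≤ (d (x n) y).toReal :=
          (ENNReal.ofReal_le_iff_le_toReal (hxS n).2).1 hn.le
        exact Real.rpow_le_rpow (le_max_right _ _) h3 (by linarith)
    filter_upwards [hRε] with n hn
    have hq1 : hlqr d p f y t ≤ hlPhi d p f y t (x n) :=
      hlqr_le_phi hp hfbot hS hT hQT ht htT.le (hxS n)
    have hq2 : hlPhi d p f y t (x n) = hlPhi d p f y (s n) (x n)
        + (d (x n) y).toReal ^ p * (hlc p t - hlc p (s n)) := hlPhi_shift hp (x n)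
    have hkey : -(e n) + (d (x n) y).toReal ^ p * (hlc p (s n) - hlc p t) ≤
        hlqr d p f y (s n) - hlqr d p f y t := by
      have h4 := (hxφ n).le
      nlinarith [hq1, hq2, h4]
    have hRs : max (δ - ε) 0 ^ p * (hlc p (s n) - hlc p t) ≤
        (d (x n) y).toReal ^ p * (hlc p (s n) - hlc p t) :=
      mul_le_mul_of_nonneg_right hn (hcs_nn n)
    rw [hquot]
    rw [div_le_iff_of_neg (hsnt n)]
    have hne : s n - t ≠ 0 := (hsnt n).ne
    have hexp : ((t - s n) + max (δ - ε) 0 ^ p * slopec (s n)) * (s n - t)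
        = -((s n - t) * (s n - t)) + max (δ - ε) 0 ^ p * (hlc p (s n) - hlc p t) := by
      rw [hslopec]
      field_simp
      try ring
    rw [hexp, ← hee n]
    linarith
  -- lower eventual bounds (selector at time t)
  have hlo : ∀ ε : ℝ, 0 < ε → ∀ᶠ n in atTop,
      -(t - s n) + (δ + ε) ^ p * slopec (s n) ≤ quot (s n) := by
    intro ε hε
    have hsel : ∀ n, ∃ z ∈ hlS d f y, hlPhi d p f y t z ≤ hlqr d p f y t + e n ∧
        (d z y).toReal ≤ δ + ε := fun n =>
      hl_select_minus hp hfbot hS hT hQT ht htT hε (he_pos n)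
    choose z hzS hzφ hzd using hsel
    refine Eventually.of_forall fun n => ?_
    have hRz : (d (z n) y).toReal ^ p ≤ (δ + ε) ^ p :=
      Real.rpow_le_rpow ENNReal.toReal_nonneg (hzd n) (by linarith)
    have hq1 : hlqr d p f y (s n) ≤ hlPhi d p f y (s n) (z n) :=
      hlqr_le_phi hp hfbot hS hT hQT (hsn_pos n) (hsnT n).le (hzS n)
    have hq2 : hlPhi d p f y (s n) (z n) = hlPhi d p f y t (z n)
        + (d (z n) y).toReal ^ p * (hlc p (s n) - hlc p t) := hlPhi_shift hp (z n)
    have hRs : (d (z n) y).toReal ^ p * (hlc p (s n) - hlc p t) ≤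
        (δ + ε) ^ p * (hlc p (s n) - hlc p t) :=
      mul_le_mul_of_nonneg_right hRz (hcs_nn n)
    have hkey : hlqr d p f y (s n) - hlqr d p f y t ≤
        e n + (δ + ε) ^ p * (hlc p (s n) - hlc p t) := by
      have h4 := hzφ n
      linarith
    rw [hquot]
    rw [le_div_iff_of_neg (hsnt n)]
    have hne : s n - t ≠ 0 := (hsnt n).ne
    have hexp : (-(t - s n) + (δ + ε) ^ p * slopec (s n)) * (s n - t)
        = (s n - t) * (s n - t) + (δ + ε) ^ p * (hlc p (s n) - hlc p t) := by
      rw [hslopec]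
      field_simp
      try ring
    rw [hexp, ← hee n]
    linarith
  -- limits of bound sequences
  have hupB : ∀ ρ : ℝ, Tendsto (fun n => (t - s n) + ρ * slopec (s n)) atTop
      (nhds (ρ * cd)) := by
    intro ρ
    have := hstt'.add (hslim.const_mul ρ)
    rwa [zero_add] at this
  have hloB : ∀ ρ : ℝ, Tendsto (fun n => -(t - s n) + ρ * slopec (s n)) atTop
      (nhds (ρ * cd)) := by
    intro ρ
    have := hstt'.neg.add (hslim.const_mul ρ)
    rwa [neg_zero, zero_add] at this
  have hbdd_le : IsBoundedUnder (· ≤ ·) atTop (fun n => quot (s n)) :=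
    ((hupB (max (δ - 1) 0 ^ p)).isBoundedUnder_le).mono_le (hup 1 one_pos)
  have hbdd_ge : IsBoundedUnder (· ≥ ·) atTop (fun n => quot (s n)) :=
    ((hloB ((δ + 1) ^ p)).isBoundedUnder_ge).mono_ge (hlo 1 one_pos)
  have hlimsup_le : limsup (fun n => quot (s n)) atTop ≤ δ ^ p * cd := by
    have hstep : ∀ ε : ℝ, 0 < ε →
        limsup (fun n => quot (s n)) atTop ≤ max (δ - ε) 0 ^ p * cd := by
      intro ε hε
      have h1 := limsup_le_limsup (hup ε hε) (hbdd_ge.isCoboundedUnder_le)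
        ((hupB (max (δ - ε) 0 ^ p)).isBoundedUnder_le)
      rwa [(hupB (max (δ - ε) 0 ^ p)).limsup_eq] at h1
    have hcont : Tendsto (fun k : ℕ => max (δ - 1 / ((k:ℝ) + 1)) 0 ^ p * cd) atTop
        (nhds (δ ^ p * cd)) := by
      have h1 : Tendsto (fun k : ℕ => δ - 1 / ((k:ℝ) + 1)) atTop (nhds δ) := by
        have := (tendsto_const_nhds (x := δ) (f := (atTop : Filter ℕ))).sub
          tendsto_one_div_add_atTop_nhds_zero_nat
        rwa [sub_zero] at this
      have h2 : Tendsto (fun k : ℕ => max (δ - 1 / ((k:ℝ) + 1)) 0) atTop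
          (nhds (max δ 0)) := h1.max tendsto_const_nhds
      rw [max_eq_left hδ0] at h2
      exact (h2.rpow_const (Or.inr (by linarith))).mul_const cd
    exact ge_of_tendsto' hcont fun k => hstep (1 / ((k:ℝ) + 1)) (by positivity)
  have hliminf_ge : δ ^ p * cd ≤ liminf (fun n => quot (s n)) atTop := by
    have hstep : ∀ ε : ℝ, 0 < ε →
        (δ + ε) ^ p * cd ≤ liminf (fun n => quot (s n)) atTop := by
      intro ε hε
      have h1 := liminf_le_liminf (hlo ε hε)
        ((hloB ((δ + ε) ^ p)).isBoundedUnder_ge) (hbdd_le.isCoboundedUnder_ge)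
      rwa [(hloB ((δ + ε) ^ p)).liminf_eq] at h1
    have hcont : Tendsto (fun k : ℕ => (δ + 1 / ((k:ℝ) + 1)) ^ p * cd) atTop
        (nhds (δ ^ p * cd)) := by
      have h1 : Tendsto (fun k : ℕ => δ + 1 / ((k:ℝ) + 1)) atTop (nhds δ) := by
        have := (tendsto_const_nhds (x := δ) (f := (atTop : Filter ℕ))).add
          tendsto_one_div_add_atTop_nhds_zero_nat
        rwa [add_zero] at this
      exact (h1.rpow_const (Or.inr (by linarith))).mul_const cd
    exact le_of_tendsto' hcont fun k => hstep (1 / ((k:ℝ) + 1)) (by positivity)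
  exact tendsto_of_le_liminf_of_limsup_le hliminf_ge hlimsup_le hbdd_le hbdd_ge

end Window7


/-- time derivative of the Hopf–Lax semigroup in the asymmetric setting:
for every `y ∈ 𝒟(f)`, `t ↦ Q_t f(y)` is locally Lipschitz on `(0, t_*(y))`, its one-sided
derivatives satisfy `d/dt⁻ Q_t f(y) = −(1/q) 𝔡⁻(y,t)^p/t^p` and
`d/dt⁺ Q_t f(y) = −(1/q) 𝔡⁺(y,t)^p/t^p` (with `1/p + 1/q = 1`), and `t ↦ Q_t f(y)` is
differentiable at `t` iff `𝔡⁻(y,t) = 𝔡⁺(y,t)`.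
(Here `t < t_*(y)` is expressed as `∃ T > t, Q_T f(y) ≠ −∞`.) -/
theorem stmt_17 {X : Type*} [TopologicalSpace X] (d : X → X → ENNReal)
    (hX : IsForwardExtendedPolish X d) (p q : ℝ) (hp : 1 < p) (hq : 1 / p + 1 / q = 1)
    (f : X → EReal) (hfbot : ∀ x, f x ≠ ⊥) (hfprop : ∃ x, f x ≠ ⊤)
    (y : X) (hyD : ∃ x, f x ≠ ⊤ ∧ d x y ≠ ⊤) :
    (∀ a b : ℝ, 0 < a → a ≤ b → (∃ T : ℝ, b < T ∧ hlQ d p f T y ≠ ⊥) →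
      ∃ K : NNReal, LipschitzOnWith K (fun t => (hlQ d p f t y).toReal) (Set.Icc a b)) ∧
    (∀ t : ℝ, 0 < t → (∃ T : ℝ, t < T ∧ hlQ d p f T y ≠ ⊥) →
      Tendsto (fun s => ((hlQ d p f s y).toReal - (hlQ d p f t y).toReal) / (s - t))
        (nhdsWithin t (Set.Iio t))
        (nhds (-(1 / q) * (hlDMinus d p f y t).toReal ^ p / t ^ p)) ∧
      Tendsto (fun s => ((hlQ d p f s y).toReal - (hlQ d p f t y).toReal) / (s - t))
        (nhdsWithin t (Set.Ioi t))
        (nhds (-(1 / q) * (hlDPlus d p f y t).toReal ^ p / t ^ p)) ∧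
      ((∃ L : ℝ, HasDerivAt (fun s => (hlQ d p f s y).toReal) L t) ↔
        hlDMinus d p f y t = hlDPlus d p f y t)) := by
  obtain ⟨x₀, hx₀f, hx₀d⟩ := hyD
  have hS : (hlS d f y).Nonempty := ⟨x₀, hx₀f, hx₀d⟩
  have hp0 : 0 < p := by linarith
  have hq' : 1 / q = (p - 1) / p := by
    have h1 : 1 / q = 1 - 1 / p := by linarith
    rw [h1]; field_simp
  have hq0 : (0:ℝ) < 1 / q := by rw [hq']; exact div_pos (by linarith) (by linarith)
  constructor
  · rintro a b ha hab ⟨T, hbT, hQT⟩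
    exact hl_lipschitzOnWith hp hfbot hS (lt_trans (lt_of_lt_of_le ha hab) hbT) hQT ha hab hbT
  · rintro t ht ⟨T, htT, hQT⟩
    have hT : 0 < T := ht.trans htT
    have hval : ∀ δ : ℝ, -(1 / q) * δ ^ p / t ^ p = δ ^ p * (-((p - 1) / p) * t ^ (-p)) := by
      intro δ
      rw [Real.rpow_neg ht.le, hq']
      have hA : t ^ p ≠ 0 := (Real.rpow_pos_of_pos ht p).ne'
      field_simp
    have hqt : (hlQ d p f t y).toReal = hlqr d p f y t :=
      hlQ_toReal_eq hp hfbot hS hT hQT ht htT.le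
    have hconv : (fun s => ((hlQ d p f s y).toReal - (hlQ d p f t y).toReal) / (s - t))
        =ᶠ[nhds t] fun s => (hlqr d p f y s - hlqr d p f y t) / (s - t) := by
      have hmem : Set.Ioo (t / 2) T ∈ nhds t := Ioo_mem_nhds (by linarith) htT
      filter_upwards [hmem] with s hs
      rw [hlQ_toReal_eq hp hfbot hS hT hQT (by linarith [hs.1]) hs.2.le, hqt]
    have hleft : Tendsto
        (fun s => ((hlQ d p f s y).toReal - (hlQ d p f t y).toReal) / (s - t))
        (nhdsWithin t (Set.Iio t))
        (nhds (-(1 / q) * (hlDMinus d p f y t).toReal ^ p / t ^ p)) := by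
      rw [hval]
      exact (hl_tendsto_left hp hfbot hS hT hQT ht htT).congr'
        ((hconv.filter_mono nhdsWithin_le_nhds).symm)
    have hright : Tendsto
        (fun s => ((hlQ d p f s y).toReal - (hlQ d p f t y).toReal) / (s - t))
        (nhdsWithin t (Set.Ioi t))
        (nhds (-(1 / q) * (hlDPlus d p f y t).toReal ^ p / t ^ p)) := by
      rw [hval]
      exact (hl_tendsto_right hp hfbot hS hT hQT ht htT).congr'
        ((hconv.filter_mono nhdsWithin_le_nhds).symm)
    have hslope_eq : slope (fun s => (hlQ d p f s y).toReal) t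
        = fun s => ((hlQ d p f s y).toReal - (hlQ d p f t y).toReal) / (s - t) :=
      funext fun s => slope_def_field _ t s
    refine ⟨hleft, hright, ?_, ?_⟩
    · rintro ⟨L, hL⟩
      have hslope := hasDerivAt_iff_tendsto_slope.1 hL
      rw [hslope_eq] at hslope
      have hl2 := hslope.mono_left (nhdsWithin_mono t
        (show Set.Iio t ⊆ {t}ᶜ from fun s hs => Set.mem_compl_singleton_iff.2 (ne_of_lt hs)))
      have hr2 := hslope.mono_left (nhdsWithin_mono t
        (show Set.Ioi t ⊆ {t}ᶜ from fun s hs => Set.mem_compl_singleton_iff.2 (ne_of_gt hs)))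
      have e1 := tendsto_nhds_unique hl2 hleft
      have e2 := tendsto_nhds_unique hr2 hright
      have h3 : -(1 / q) * (hlDMinus d p f y t).toReal ^ p / t ^ p
          = -(1 / q) * (hlDPlus d p f y t).toReal ^ p / t ^ p := by rw [← e1, ← e2]
      have htp : (0:ℝ) < t ^ p := Real.rpow_pos_of_pos ht p
      have hpow : (hlDMinus d p f y t).toReal ^ p = (hlDPlus d p f y t).toReal ^ p := by
        have h4 := congrArg (fun z : ℝ => z * t ^ p * (-q)) h3
        have hqne : q ≠ 0 := by
          intro h; rw [h] at hq0; norm_num at hq0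
        field_simp at h4
        exact h4
      have heqδ : (hlDMinus d p f y t).toReal = (hlDPlus d p f y t).toReal := by
        by_contra hne
        rcases lt_or_gt_of_ne hne with h | h
        · exact absurd hpow
            (ne_of_lt (Real.rpow_lt_rpow ENNReal.toReal_nonneg h hp0))
        · exact absurd hpow.symm
            (ne_of_lt (Real.rpow_lt_rpow ENNReal.toReal_nonneg h hp0))
      exact (ENNReal.toReal_eq_toReal_iff' (hlDMinus_ne_top hp hfbot hS hT hQT ht htT)
        (hlDPlus_ne_top hp hfbot hS hT hQT ht htT)).1 heqδ
    · intro hDD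
      refine ⟨-(1 / q) * (hlDPlus d p f y t).toReal ^ p / t ^ p, ?_⟩
      rw [hasDerivAt_iff_tendsto_slope, hslope_eq, ← nhdsLT_sup_nhdsGT t,
        tendsto_sup]
      constructor
      · rw [← hDD]
        exact hleft
      · exact hright
end

section
/- (Uniform bounds for the Hopf–Lax semigroup of a bounded function.) If f: X → ℝ is bounded on a forward extended Polish space, then for every t > 0: inf_X f ≤ inf_X Q_t f ≤ sup_X Q_t f ≤ sup_X f; every minimizing sequence for Q_t f(y) stays within distance (p t^{p−1} osc(f))^{1/p} of y (i.e., 𝔡⁺(y,t) ≤ (p t^{p−1} osc(f))^{1/p}); and Q_t f is forward Lipschitz with Lip(Q_t f) ≤ 2^{p−1}·(p·osc(f)/t)^{1/q}, where osc(f) = sup f − inf f and 1/p + 1/q = 1. -/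
open Filter

private lemma mvt_rpow {p a b : ℝ} (hp : 1 ≤ p) (ha : 0 ≤ a) (hb : 0 ≤ b) :
    (a + b) ^ p - a ^ p ≤ p * (a + b) ^ (p - 1) * b := by
  rcases eq_or_lt_of_le hb with rfl | hb'
  · simp
  · obtain ⟨c, hc, hc'⟩ := exists_hasDerivAt_eq_slope (fun x => x ^ p)
      (fun x => p * x ^ (p - 1)) (by linarith : a < a + b)
      (fun x _ => (Real.continuousAt_rpow_const x p (Or.inr (by linarith))).continuousWithinAt)
      (fun x _ => Real.hasDerivAt_rpow_const (Or.inr hp))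
    have hc0 : 0 < c := lt_of_le_of_lt ha hc.1
    have heq : (a + b) ^ p - a ^ p = p * c ^ (p - 1) * b := by
      have hb0 : (a + b - a) = b := by ring
      rw [hb0] at hc'
      field_simp at hc'
      linarith [hc']
    rw [heq]
    have : c ^ (p - 1) ≤ (a + b) ^ (p - 1) :=
      Real.rpow_le_rpow hc0.le hc.2.le (by linarith)
    gcongr

private lemma key_id {p q t o : ℝ} (hp : 1 < p) (hq : 1 / p + 1 / q = 1) (ht : 0 < t)
    (ho : 0 < o) :
    (p * o / t) ^ (1 / q) * (p * t ^ (p - 1) * o) ^ (1 / p) = p * o := by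
  have hp0 : (0:ℝ) < p := by linarith
  have h1q : 1 / q = (p - 1) / p := by
    have : (p - 1) / p = 1 - 1 / p := by field_simp
    linarith
  have e1 : (p * o / t) ^ (1 / q) = p ^ (1/q) * o ^ (1/q) / t ^ (1/q) := by
    rw [Real.div_rpow (by positivity) ht.le, Real.mul_rpow hp0.le ho.le]
  have e2 : (p * t ^ (p - 1) * o) ^ (1 / p)
      = p ^ (1/p) * t ^ (1/q) * o ^ (1/p) := by
    rw [Real.mul_rpow (by positivity) ho.le, Real.mul_rpow hp0.le (by positivity),
      ← Real.rpow_mul ht.le]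
    rw [show (p - 1) * (1 / p) = 1 / q by rw [h1q]; ring]
  have hpp : p ^ (1/q) * p ^ (1/p) = p := by
    rw [← Real.rpow_add hp0, show 1/q + 1/p = 1 by linarith, Real.rpow_one]
  have hoo : o ^ (1/q) * o ^ (1/p) = o := by
    rw [← Real.rpow_add ho, show 1/q + 1/p = 1 by linarith, Real.rpow_one]
  have htq : t ^ (1/q) ≠ 0 := (Real.rpow_pos_of_pos ht _).ne'
  rw [e1, e2]
  calc p ^ (1/q) * o ^ (1/q) / t ^ (1/q) * (p ^ (1/p) * t ^ (1/q) * o ^ (1/p))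
      = (p ^ (1/q) * p ^ (1/p)) * (o ^ (1/q) * o ^ (1/p)) * (t ^ (1/q) / t ^ (1/q)) := by
        ring
    _ = p * o := by rw [div_self htq, hpp, hoo, mul_one]

private lemma key_id2 {p q t o : ℝ} (hp : 1 < p) (hq : 1 / p + 1 / q = 1) (ht : 0 < t)
    (ho : 0 < o) :
    p * (2 * (p * t ^ (p - 1) * o) ^ (1 / p)) ^ (p - 1) / (p * t ^ (p - 1))
      = 2 ^ (p - 1) * (p * o / t) ^ (1 / q) := by
  have hp0 : (0:ℝ) < p := by linarith
  set Cr := p * t ^ (p - 1) with hCr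
  have hCr0 : 0 < Cr := by positivity
  set R := (Cr * o) ^ (1 / p) with hR
  have hR0 : 0 < R := Real.rpow_pos_of_pos (by positivity) _
  have hRp : R ^ p = Cr * o := by
    rw [hR, ← Real.rpow_mul (by positivity), one_div_mul_cancel hp0.ne', Real.rpow_one]
  have hRp1 : R ^ (p - 1) = Cr * o / R := by
    rw [Real.rpow_sub hR0, Real.rpow_one, hRp]
  have hK : (p * o / t) ^ (1 / q) = p * o / R := by
    have := key_id hp hq ht ho
    rw [← hCr, ← hR] at this
    field_simp at this ⊢
    linarith [this]
  rw [Real.mul_rpow (by norm_num) hR0.le, hRp1, hK]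
  field_simp

/-- uniform bounds for the Hopf–Lax semigroup of a bounded function `f` with
`m ≤ f ≤ M`: `inf f ≤ Q_t f ≤ sup f`; every minimizing sequence for `Q_t f(y)` stays within
distance `(p t^{p−1} osc(f))^{1/p}` of `y` (`𝔡⁺(y,t) ≤ (p t^{p−1}(M−m))^{1/p}`); and `Q_t f`
is forward Lipschitz with `Lip(Q_t f) ≤ 2^{p−1}(p·osc(f)/t)^{1/q}`, where `osc(f) = M − m`
and `1/p + 1/q = 1`. -/
theorem stmt_19 {X : Type*} [TopologicalSpace X] (d : X → X → ENNReal)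
    (hX : IsForwardExtendedPolish X d) (p q : ℝ) (hp : 1 < p) (hq : 1 / p + 1 / q = 1)
    (f : X → ℝ) (m M : ℝ) (hm : ∀ x, m ≤ f x) (hM : ∀ x, f x ≤ M)
    (t : ℝ) (ht : 0 < t) :
    (∀ y : X, (m : EReal) ≤ hlQ d p (fun x => (f x : EReal)) t y ∧
      hlQ d p (fun x => (f x : EReal)) t y ≤ (M : EReal)) ∧
    (∀ y : X, hlDPlus d p (fun x => (f x : EReal)) y t ≤
      ENNReal.ofReal ((p * t ^ (p - 1) * (M - m)) ^ (1 / p))) ∧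
    (∀ y z : X,
      ENNReal.ofReal ((hlQ d p (fun x => (f x : EReal)) t z).toReal -
          (hlQ d p (fun x => (f x : EReal)) t y).toReal) ≤
        ENNReal.ofReal ((2 : ℝ) ^ (p - 1) * (p * (M - m) / t) ^ (1 / q)) * d y z) := by
  have hp0 : (0:ℝ) < p := by linarith
  set F : X → EReal := fun x => ((f x : ℝ) : EReal) with hF
  set Cr : ℝ := p * t ^ (p - 1) with hCrdef
  have hCr : 0 < Cr := by positivity
  set C : ENNReal := ENNReal.ofReal Cr with hCdef
  have hC0 : C ≠ 0 := by
    simp only [hCdef, ne_eq, ENNReal.ofReal_eq_zero, not_le]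
    exact hCr
  -- basic bounds on the cost
  have cost_lb : ∀ x y, (m : EReal) ≤ hlCost d p F t x y := by
    intro x y
    unfold hlCost
    calc (m : EReal) ≤ ((f x : ℝ) : EReal) := EReal.coe_le_coe_iff.2 (hm x)
      _ = ((f x : ℝ) : EReal) + 0 := (add_zero _).symm
      _ ≤ _ := add_le_add le_rfl (EReal.coe_ennreal_nonneg _)
  have hQlb : ∀ y, (m : EReal) ≤ hlQ d p F t y := by
    intro y
    unfold hlQ
    exact le_iInf fun x => cost_lb x y
  have cost_self : ∀ y, hlCost d p F t y y = ((f y : ℝ) : EReal) := by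
    intro y
    unfold hlCost
    rw [(hX.zero_iff y y).2 rfl, ENNReal.zero_rpow_of_pos hp0, ENNReal.zero_div,
      EReal.coe_ennreal_zero, add_zero]
  have hQub : ∀ y, hlQ d p F t y ≤ (M : EReal) := by
    intro y
    refine le_trans (iInf_le _ y) ?_
    rw [cost_self]
    exact EReal.coe_le_coe_iff.2 (hM y)
  have hQtop : ∀ y, hlQ d p F t y ≠ ⊤ :=
    fun y => ne_top_of_le_ne_top (EReal.coe_ne_top M) (hQub y)
  have hQbot : ∀ y, hlQ d p F t y ≠ ⊥ :=
    fun y => ((EReal.bot_lt_coe m).trans_le (hQlb y)).ne'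
  have hQcoe : ∀ y, (((hlQ d p F t y).toReal : ℝ) : EReal) = hlQ d p F t y :=
    fun y => EReal.coe_toReal (hQtop y) (hQbot y)
  have hQtr1 : ∀ y, m ≤ (hlQ d p F t y).toReal := by
    intro y
    have := EReal.toReal_le_toReal (hQlb y) (EReal.coe_ne_bot m) (hQtop y)
    rwa [EReal.toReal_coe] at this
  have hQtr2 : ∀ y, (hlQ d p F t y).toReal ≤ M := by
    intro y
    have := EReal.toReal_le_toReal (hQub y) (hQbot y) (EReal.coe_ne_top M)
    rwa [EReal.toReal_coe] at this
  -- near minimizers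
  have near : ∀ (y : X) (ε : ℝ), 0 < ε →
      ∃ x, hlCost d p F t x y < (((hlQ d p F t y).toReal + ε : ℝ) : EReal) := by
    intro y ε hε
    have h1 : hlQ d p F t y < (((hlQ d p F t y).toReal + ε : ℝ) : EReal) := by
      conv_lhs => rw [← hQcoe y]
      exact EReal.coe_lt_coe_iff.2 (by linarith)
    unfold hlQ at h1
    exact iInf_lt_iff.1 h1
  -- finite form of the cost
  have cost_eq : ∀ x y, d x y ≠ ⊤ →
      hlCost d p F t x y = ((f x + (d x y).toReal ^ p / Cr : ℝ) : EReal) := by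
    intro x y hxy
    unfold hlCost
    have hDtop : d x y ^ p / C ≠ ⊤ :=
      (ENNReal.div_lt_top (ENNReal.rpow_ne_top_of_nonneg hp0.le hxy) hC0).ne
    have h1 : ((d x y ^ p / C : ENNReal) : EReal)
        = (((d x y ^ p / C).toReal : ℝ) : EReal) := by
      rw [← EReal.toReal_coe_ennreal]
      exact (EReal.coe_toReal (by simpa using hDtop) (EReal.coe_ennreal_ne_bot _)).symm
    rw [h1, ← EReal.coe_add]
    congr 1
    rw [ENNReal.toReal_div, ← ENNReal.toReal_rpow, hCdef, ENNReal.toReal_ofReal hCr.le]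
  -- distance bound from a cost bound
  have dist_bound : ∀ x y (B : ℝ), hlCost d p F t x y ≤ (B : EReal) →
      d x y ≤ ENNReal.ofReal ((Cr * (B - m)) ^ (1/p)) := by
    intro x y B hB
    have hxy : d x y ≠ ⊤ := by
      intro h
      rw [show hlCost d p F t x y = ⊤ by
        unfold hlCost
        rw [h, ENNReal.top_rpow_of_pos hp0, ENNReal.top_div_of_ne_top ENNReal.ofReal_ne_top,
          EReal.coe_ennreal_top, EReal.coe_add_top]] at hB
      exact (EReal.coe_ne_top B) (top_le_iff.1 hB)
    rw [cost_eq x y hxy] at hB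
    have hreal : f x + (d x y).toReal ^ p / Cr ≤ B := EReal.coe_le_coe_iff.1 hB
    have h1 : (d x y).toReal ^ p ≤ Cr * (B - m) := by
      have hmx := hm x
      have h2 : (d x y).toReal ^ p / Cr ≤ B - m := by linarith
      calc (d x y).toReal ^ p = (d x y).toReal ^ p / Cr * Cr := by field_simp
        _ ≤ (B - m) * Cr := mul_le_mul_of_nonneg_right h2 hCr.le
        _ = Cr * (B - m) := mul_comm _ _
    have h2 : (d x y).toReal ≤ (Cr * (B - m)) ^ (1/p) := by
      have h3 : (d x y).toReal = ((d x y).toReal ^ p) ^ (1/p) := by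
        rw [← Real.rpow_mul ENNReal.toReal_nonneg, mul_one_div, div_self hp0.ne',
          Real.rpow_one]
      rw [h3]
      exact Real.rpow_le_rpow (by positivity) h1 (by positivity)
    have := ENNReal.ofReal_le_ofReal h2
    rwa [ENNReal.ofReal_toReal hxy] at this
  refine ⟨fun y => ⟨hQlb y, hQub y⟩, ?_, ?_⟩
  · -- Part 2
    intro y
    have hosc0 : 0 ≤ M - m := by linarith [hm y, hM y]
    unfold hlDPlus
    refine iSup_le ?_
    rintro ⟨u, hu⟩
    refine ENNReal.le_of_forall_pos_le_add fun ε' hε' _ => ?_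
    have hε'R : (0:ℝ) < ε' := hε'
    obtain ⟨δ, hδlt, hδpos⟩ : ∃ δ : ℝ,
        (Cr * (M - m + δ)) ^ (1/p) < (Cr * (M - m)) ^ (1/p) + (ε' : ℝ) ∧ 0 < δ := by
      have h1 : Continuous (fun s : ℝ => (Cr * (M - m + s)) ^ (1/p)) :=
        (Real.continuous_rpow_const (by positivity)).comp
          (continuous_const.mul (continuous_const.add continuous_id))
      have htend : Tendsto (fun s : ℝ => (Cr * (M - m + s)) ^ (1/p)) (nhds 0)
          (nhds ((Cr * (M - m)) ^ (1/p))) := h1.tendsto' 0 _ (by norm_num)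
      have hev := htend.eventually_lt_const (by linarith :
        (Cr * (M - m)) ^ (1/p) < (Cr * (M - m)) ^ (1/p) + (ε' : ℝ))
      have hev' : ∀ᶠ s in nhdsWithin (0:ℝ) (Set.Ioi 0),
          (Cr * (M - m + s)) ^ (1/p) < (Cr * (M - m)) ^ (1/p) + (ε' : ℝ) :=
        hev.filter_mono nhdsWithin_le_nhds
      obtain ⟨δ, h1', h2'⟩ := (hev'.and eventually_mem_nhdsWithin).exists
      exact ⟨δ, h1', h2'⟩
    have hQδ : hlQ d p F t y < (((hlQ d p F t y).toReal + δ : ℝ) : EReal) := by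
      conv_lhs => rw [← hQcoe y]
      exact EReal.coe_lt_coe_iff.2 (by linarith)
    have hev2 := hu.eventually_lt_const hQδ
    refine limsup_le_of_le (by isBoundedDefault) ?_
    filter_upwards [hev2] with i hi
    refine le_trans (dist_bound (u i) y _ hi.le) ?_
    have hb1 : (Cr * ((hlQ d p F t y).toReal + δ - m)) ^ (1/p) ≤ (Cr * (M - m + δ)) ^ (1/p) :=
      Real.rpow_le_rpow (mul_nonneg hCr.le (by linarith [hQtr1 y]))
        (mul_le_mul_of_nonneg_left (by linarith [hQtr2 y]) hCr.le) (by positivity)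
    calc ENNReal.ofReal ((Cr * ((hlQ d p F t y).toReal + δ - m)) ^ (1/p))
        ≤ ENNReal.ofReal ((Cr * (M - m + δ)) ^ (1/p)) := ENNReal.ofReal_le_ofReal hb1
      _ ≤ ENNReal.ofReal ((Cr * (M - m)) ^ (1/p) + (ε' : ℝ)) := ENNReal.ofReal_le_ofReal hδlt.le
      _ = ENNReal.ofReal ((Cr * (M - m)) ^ (1/p)) + ε' := by
          rw [ENNReal.ofReal_add (Real.rpow_nonneg (mul_nonneg hCr.le hosc0) _) ε'.coe_nonneg,
            ENNReal.ofReal_coe_nnreal]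
  · -- Part 3
    intro y z
    have hosc0 : 0 ≤ M - m := by linarith [hm y, hM y]
    set ry := (hlQ d p F t y).toReal with hry
    set rz := (hlQ d p F t z).toReal with hrz
    have hrym : m ≤ ry := hQtr1 y
    have hryM : ry ≤ M := hQtr2 y
    have hrzm : m ≤ rz := hQtr1 z
    have hrzM : rz ≤ M := hQtr2 z
    rcases eq_or_lt_of_le hosc0 with hosc | hosc
    · have h1 : rz - ry ≤ 0 := by linarith
      rw [ENNReal.ofReal_eq_zero.2 h1]
      exact zero_le
    · set K := (2:ℝ)^(p-1) * (p * (M - m)/t)^(1/q) with hK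
      have hK0 : 0 < K :=
        mul_pos (Real.rpow_pos_of_pos two_pos _)
          (Real.rpow_pos_of_pos (div_pos (mul_pos hp0 hosc) ht) _)
      rcases eq_or_ne (d y z) ⊤ with hdyz | hdyz
      · rw [hdyz, ENNReal.mul_top (by simp [ENNReal.ofReal_eq_zero, not_le, hK0])]
        exact le_top
      · set b := (d y z).toReal with hb
        have hb0 : (0:ℝ) ≤ b := ENNReal.toReal_nonneg
        suffices hmain : rz - ry ≤ K * b by
          calc ENNReal.ofReal (rz - ry) ≤ ENNReal.ofReal (K * b) :=
              ENNReal.ofReal_le_ofReal hmain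
            _ = ENNReal.ofReal K * ENNReal.ofReal b := ENNReal.ofReal_mul hK0.le
            _ = ENNReal.ofReal K * d y z := by rw [hb, ENNReal.ofReal_toReal hdyz]
        set R0 := (Cr * (M - m)) ^ (1/p) with hR0
        rcases le_or_gt R0 b with hcase | hcase
        · -- large distance
          have hki := key_id hp hq ht hosc
          rw [← hCrdef] at hki
          have hKR : K * R0 = 2^(p-1) * (p * (M-m)) := by
            rw [hK, hR0, mul_assoc, hki]
          have h2p : (1:ℝ) ≤ 2^(p-1) := by
            rw [show (1:ℝ) = (2:ℝ)^(0:ℝ) by simp]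
            exact Real.rpow_le_rpow_of_exponent_le one_le_two (by linarith)
          have h3 : M - m ≤ K * R0 := by
            rw [hKR]
            have e1 : p*(M-m) ≤ 2^(p-1)*(p*(M-m)) :=
              le_mul_of_one_le_left (by positivity) h2p
            have e2 : (0:ℝ) ≤ (p-1)*(M-m) := mul_nonneg (by linarith) hosc.le
            nlinarith
          have h4 : K * R0 ≤ K * b := mul_le_mul_of_nonneg_left hcase hK0.le
          linarith
        · -- small distance
          have key : ∀ ε : ℝ, 0 < ε →
              rz - ry ≤ 2^(p-1) * (p*(M-m+ε)/t)^(1/q) * b + ε := by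
            intro ε hε
            obtain ⟨x, hx⟩ := near y ε hε
            set Rε := (Cr * (M - m + ε)) ^ (1/p) with hRε
            have hRεpos : 0 < Rε := Real.rpow_pos_of_pos (mul_pos hCr (by linarith)) _
            have hdxy : d x y ≤ ENNReal.ofReal ((Cr * (ry + ε - m)) ^ (1/p)) :=
              dist_bound x y _ hx.le
            have hxytop : d x y ≠ ⊤ := ne_top_of_le_ne_top ENNReal.ofReal_ne_top hdxy
            set A := (d x y).toReal with hA
            have hA0 : (0:ℝ) ≤ A := ENNReal.toReal_nonneg
            have hARε : A ≤ Rε := by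
              have h1 : (Cr * (ry + ε - m))^(1/p) ≤ Rε :=
                Real.rpow_le_rpow (mul_nonneg hCr.le (by linarith))
                  (mul_le_mul_of_nonneg_left (by linarith) hCr.le) (by positivity)
              exact le_trans (ENNReal.toReal_le_of_le_ofReal
                (Real.rpow_nonneg (mul_nonneg hCr.le (by linarith)) _) hdxy) h1
            have hbRε : b ≤ Rε := by
              have h1 : R0 ≤ Rε :=
                Real.rpow_le_rpow (mul_nonneg hCr.le hosc0)
                  (mul_le_mul_of_nonneg_left (by linarith) hCr.le) (by positivity)
              linarith
            have hxztop : d x z ≠ ⊤ := by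
              intro h
              have h1 := hX.triangle x y z
              rw [h] at h1
              exact ENNReal.add_ne_top.2 ⟨hxytop, hdyz⟩ (top_le_iff.1 h1)
            have hxz : (d x z).toReal ≤ A + b := by
              have h1 := ENNReal.toReal_mono (ENNReal.add_ne_top.2 ⟨hxytop, hdyz⟩)
                (hX.triangle x y z)
              rwa [ENNReal.toReal_add hxytop hdyz] at h1
            have hQzle : rz ≤ f x + (d x z).toReal ^ p / Cr := by
              have h1 : hlQ d p F t z ≤ hlCost d p F t x z := by
                unfold hlQ; exact iInf_le _ x
              rw [cost_eq x z hxztop] at h1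
              have h2 := EReal.toReal_le_toReal h1 (hQbot z) (EReal.coe_ne_top _)
              rwa [EReal.toReal_coe] at h2
            have hQygt : f x + A ^ p / Cr < ry + ε := by
              rw [cost_eq x y hxytop] at hx
              exact EReal.coe_lt_coe_iff.1 hx
            have step1 : rz - ry ≤ ((A + b)^p - A^p)/Cr + ε := by
              have h2 : (d x z).toReal ^ p ≤ (A + b)^p :=
                Real.rpow_le_rpow ENNReal.toReal_nonneg hxz (by positivity)
              have h3 : (d x z).toReal ^ p / Cr ≤ (A+b)^p / Cr := by gcongr
              have h4 : ((A+b)^p - A^p)/Cr = (A+b)^p/Cr - A^p/Cr := by ring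
              linarith
            have step2 : ((A + b)^p - A^p)/Cr ≤ p * (2*Rε)^(p-1) * b / Cr := by
              have h4 := mvt_rpow hp.le hA0 hb0
              have h5 : (A+b)^(p-1) ≤ (2*Rε)^(p-1) :=
                Real.rpow_le_rpow (by linarith) (by linarith) (by linarith)
              have h6 : p * (A+b)^(p-1) * b ≤ p * (2*Rε)^(p-1) * b := by
                have := mul_le_mul_of_nonneg_left h5 hp0.le
                exact mul_le_mul_of_nonneg_right this hb0
              have h7 : (A+b)^p - A^p ≤ p*(2*Rε)^(p-1)*b := le_trans h4 h6
              gcongr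
            have step3 : p * (2*Rε)^(p-1) * b / Cr
                = 2^(p-1) * (p*(M-m+ε)/t)^(1/q) * b := by
              have hki2 := key_id2 hp hq ht (show (0:ℝ) < M - m + ε by linarith)
              rw [← hCrdef, ← hRε] at hki2
              calc p * (2*Rε)^(p-1) * b / Cr = p * (2*Rε)^(p-1) / Cr * b := by ring
                _ = 2^(p-1) * (p*(M-m+ε)/t)^(1/q) * b := by rw [hki2]
            linarith
          have h1q0 : (0:ℝ) ≤ 1/q := by
            have h1 : 1/q = 1 - 1/p := by linarith
            have h2 : 1/p ≤ 1 := by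
              rw [div_le_one hp0]; linarith
            linarith
          have hcont : Continuous (fun ε : ℝ => 2^(p-1) * (p*(M-m+ε)/t)^(1/q) * b + ε) := by
            have h1 : Continuous (fun ε : ℝ => p*(M-m+ε)/t) :=
              (continuous_const.mul (continuous_const.add continuous_id)).div_const t
            exact ((continuous_const.mul
              ((Real.continuous_rpow_const h1q0).comp h1)).mul continuous_const).add
              continuous_id
          have htendK : Tendsto (fun ε : ℝ => 2^(p-1) * (p*(M-m+ε)/t)^(1/q) * b + ε)
              (nhdsWithin 0 (Set.Ioi 0)) (nhds (K * b)) :=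
            (hcont.tendsto' 0 _ (by norm_num [hK])).mono_left nhdsWithin_le_nhds
          refine ge_of_tendsto htendK ?_
          filter_upwards [eventually_mem_nhdsWithin] with ε hε using key ε hε
end
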